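/- arXiv:1503.04679 — 4 statements merged into one kernel-verified Lean document; each statement's English description precedes it below -/
import Mathlib

section
/- Let G be a cyclic group of order n ≥ 4 and let d ∈ [3, n−1]. Then for each k ∈ ℕ₀, the set (2k+2) + {0, d−2} + {ν(n−2) : ν ∈ [0, k]} belongs to 𝓛(G). -/
/-- A minimal zero-sum sequence over `G`: a nonempty zero-sum sequence that is not the
union of two nonempty zero-sum sequences (i.e. an atom of the monoid `ℬ(G)` of zero-sum
sequences over `G`). -/
def IsMinZeroSum {G : Type*} [AddCommGroup G] (A : Multiset G) : Prop :=
  A ≠ 0 ∧ A.sum = 0 ∧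
    ¬∃ B C : Multiset G, B ≠ 0 ∧ C ≠ 0 ∧ B.sum = 0 ∧ C.sum = 0 ∧ A = B + C

/-- `lengthSet A` is the set of lengths `𝖫(A)`: the set of all `k` such that `A` is a
union of `k` atoms. -/
def lengthSet {G : Type*} [AddCommGroup G] (A : Multiset G) : Set ℕ :=
  {k | ∃ f : Multiset (Multiset G),
    Multiset.card f = k ∧ (∀ B ∈ f, IsMinZeroSum B) ∧ f.sum = A}

/-- `lengthSystem G` is the system of sets of lengths `𝓛(G) = {𝖫(A) : A ∈ ℬ(G)}`. -/
def lengthSystem (G : Type*) [AddCommGroup G] : Set (Set ℕ) :=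
  {L | ∃ A : Multiset G, A.sum = 0 ∧ lengthSet A = L}

/-- Sets of lengths of a sequence supported in `G₀ ⊆ G`, with respect to factorizations
into atoms supported in `G₀`. -/
def lengthSet₀ {G : Type*} [AddCommGroup G] (G₀ : Set G) (A : Multiset G) : Set ℕ :=
  {k | ∃ f : Multiset (Multiset G),
    Multiset.card f = k ∧ (∀ B ∈ f, IsMinZeroSum B ∧ ∀ g ∈ B, g ∈ G₀) ∧ f.sum = A}

/-- The system of sets of lengths `𝓛(G₀)` of a subset `G₀ ⊆ G`. -/
def lengthSystem₀ {G : Type*} [AddCommGroup G] (G₀ : Set G) : Set (Set ℕ) :=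
  {L | ∃ A : Multiset G, A.sum = 0 ∧ (∀ g ∈ A, g ∈ G₀) ∧ lengthSet₀ G₀ A = L}

/-- The set of successive distances `Δ(L)` of a set `L ⊆ ℕ`. -/
def deltaOfSet (L : Set ℕ) : Set ℕ :=
  {d | ∃ a ∈ L, ∃ b ∈ L, a < b ∧ d = b - a ∧ ∀ c ∈ L, c ≤ a ∨ b ≤ c}

/-- `Δ(G₀)`: the union of the sets `Δ(L)` over all `L ∈ 𝓛(G₀)`. -/
def deltaOfSubset {G : Type*} [AddCommGroup G] (G₀ : Set G) : Set ℕ :=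
  ⋃ L ∈ lengthSystem₀ G₀, deltaOfSet L

/-- `Δ*(G) = {min Δ(G₀) : G₀ ⊆ G with Δ(G₀) ≠ ∅}`. -/
def deltaStar (G : Type*) [AddCommGroup G] : Set ℕ :=
  {d | ∃ G₀ : Set G, (deltaOfSubset G₀).Nonempty ∧ sInf (deltaOfSubset G₀) = d}

/-- The Davenport constant of `G`: the maximal length of a minimal zero-sum sequence. -/
noncomputable def davenport (G : Type*) [AddCommGroup G] : ℕ :=
  sSup {n | ∃ A : Multiset G, IsMinZeroSum A ∧ Multiset.card A = n}

/-- View a set of natural numbers as a set of integers. -/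
def natSetToInt (L : Set ℕ) : Set ℤ :=
  (fun n : ℕ => (n : ℤ)) '' L

/-- `L` is an arithmetical progression with difference `d > 0`. -/
def IsAP (d : ℕ) (L : Set ℤ) : Prop :=
  0 < d ∧ ∃ (a : ℤ) (l : ℕ), L = {x : ℤ | ∃ ν : ℕ, ν ≤ l ∧ x = a + (ν : ℤ) * d}

/-- `L` is an almost arithmetical progression (AAP) with difference `d > 0` and bound `M`:
`L = y + (L' ∪ L* ∪ L'') ⊆ y + dℤ` with `L* = {0, d, …, ld}`, `L' ⊆ [-M, -1]`,
`L'' ⊆ ld + [1, M]`. -/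
def IsAAP (d M : ℕ) (L : Set ℤ) : Prop :=
  0 < d ∧ ∃ (y : ℤ) (l : ℕ) (L' L'' : Set ℤ),
    L' ⊆ Set.Icc (-(M : ℤ)) (-1) ∧
    L'' ⊆ Set.Icc ((l : ℤ) * d + 1) ((l : ℤ) * d + M) ∧
    (∀ x ∈ L', (d : ℤ) ∣ x) ∧ (∀ x ∈ L'', (d : ℤ) ∣ x) ∧
    L = (fun x => y + x) '' (L' ∪ {x : ℤ | ∃ ν : ℕ, ν ≤ l ∧ x = (ν : ℤ) * d} ∪ L'')

/-- `L` is an arithmetical multiprogression (AMP) with difference `d > 0` and period `D`,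
where `{0, d} ⊆ D ⊆ [0, d]`: `L` is finite nonempty and
`L = (min L + D + dℤ) ∩ [min L, max L]`. -/
def IsAMP (d : ℕ) (D : Set ℕ) (L : Set ℤ) : Prop :=
  0 < d ∧ 0 ∈ D ∧ d ∈ D ∧ D ⊆ Set.Icc 0 d ∧ L.Finite ∧ L.Nonempty ∧
    ∃ a b : ℤ, IsLeast L a ∧ IsGreatest L b ∧
      L = {x : ℤ | ∃ e ∈ D, ∃ m : ℤ, x = a + (e : ℤ) + m * d} ∩ Set.Icc a b

/-- `L` is an almost arithmetical multiprogression (AAMP) with difference `d > 0`,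
period `D` (with `{0, d} ⊆ D ⊆ [0, d]`) and bound `M`:
`L = y + (L' ∪ L* ∪ L'') ⊆ y + D + dℤ` where `L*` is an AMP with difference `d`,
period `D` and `min L* = 0`, `L' ⊆ [-M, -1]` and `L'' ⊆ max L* + [1, M]`. -/
def IsAAMP (d : ℕ) (D : Set ℕ) (M : ℕ) (L : Set ℤ) : Prop :=
  0 < d ∧ 0 ∈ D ∧ d ∈ D ∧ D ⊆ Set.Icc 0 d ∧
    ∃ (y : ℤ) (L' Lstar L'' : Set ℤ) (b : ℤ),
      IsLeast Lstar 0 ∧ IsGreatest Lstar b ∧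
      Lstar = {x : ℤ | ∃ e ∈ D, ∃ m : ℤ, x = (e : ℤ) + m * d} ∩ Set.Icc 0 b ∧
      L' ⊆ Set.Icc (-(M : ℤ)) (-1) ∧
      L'' ⊆ Set.Icc (b + 1) (b + (M : ℤ)) ∧
      (∀ x ∈ L' ∪ L'', ∃ e ∈ D, ∃ m : ℤ, x = (e : ℤ) + m * d) ∧
      L = (fun x => y + x) '' (L' ∪ Lstar ∪ L'')

/-- An atom of the relative block monoid `ℬ_K(G)`: a nonempty sequence `S` with
`σ(S) ∈ K` such that no proper nonempty subsequence has sum in `K`. -/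
def IsAtomRel {G : Type*} [AddCommGroup G] (K : AddSubgroup G) (S : Multiset G) : Prop :=
  S ≠ 0 ∧ S.sum ∈ K ∧ ∀ T : Multiset G, T ≤ S → T ≠ 0 → T ≠ S → T.sum ∉ K

/-- The relative Davenport constant `D_K(G) ∈ ℕ ∪ {∞}`: the smallest `l` such that every
sequence over `G` of length at least `l` has a nonempty subsequence with sum in `K`. -/
noncomputable def davenportRel (G : Type*) [AddCommGroup G] (K : AddSubgroup G) : ℕ∞ :=
  sInf {l : ℕ∞ | ∀ S : Multiset G, l ≤ (Multiset.card S : ℕ∞) →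
    ∃ T : Multiset G, T ≤ S ∧ T ≠ 0 ∧ T.sum ∈ K}


open Multiset in
private lemma decomp3 {G : Type*} [DecidableEq G] {g₁ g₂ g₃ : G} (h12 : g₁ ≠ g₂) (h13 : g₁ ≠ g₃)
    (h23 : g₂ ≠ g₃) {B : Multiset G} (hB : ∀ x ∈ B, x = g₁ ∨ x = g₂ ∨ x = g₃) :
    B = Multiset.replicate (B.count g₁) g₁ + Multiset.replicate (B.count g₂) g₂ +
      Multiset.replicate (B.count g₃) g₃ := by
  ext y
  rw [count_add, count_add, count_replicate, count_replicate, count_replicate]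
  by_cases h1 : y = g₁
  · subst h1; simp [Ne.symm h12, Ne.symm h13]
  · by_cases h2 : y = g₂
    · subst h2; simp [h12, Ne.symm h23]
    · by_cases h3 : y = g₃
      · subst h3; simp [h13, h23]
      · have hy : y ∉ B := fun hy => by rcases hB y hy with h | h | h <;> simp_all
        simp [count_eq_zero.mpr hy, Ne.symm h1, Ne.symm h2, Ne.symm h3]

open Multiset in
private lemma isMin_pair {G : Type*} [AddCommGroup G] {g : G} (hg0 : g ≠ 0) :
    IsMinZeroSum ({g, -g} : Multiset G) := by
  refine ⟨by simp, by simp, ?_⟩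
  rintro ⟨B, C, hB0, hC0, hBs, hCs, hBC⟩
  have hcard : Multiset.card B + Multiset.card C = 2 := by
    have := congrArg Multiset.card hBC
    simpa using this.symm
  have hB1 : Multiset.card B = 1 := by
    have h1 : 0 < Multiset.card B := Multiset.card_pos.mpr hB0
    have h2 : 0 < Multiset.card C := Multiset.card_pos.mpr hC0
    omega
  obtain ⟨x, rfl⟩ := Multiset.card_eq_one.mp hB1
  have hx : x ∈ ({g, -g} : Multiset G) := by rw [hBC]; simp
  have hxs : x = 0 := by simpa using hBs
  rcases (by simpa using hx : x = g ∨ x = -g) with rfl | rfl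
  · exact hg0 hxs
  · exact hg0 (by simpa using hxs)

open Multiset in
private lemma isMin_repl {G : Type*} [AddCommGroup G] {g : G} {n : ℕ}
    (hord : addOrderOf g = n) (hn : 0 < n) :
    IsMinZeroSum (Multiset.replicate n g) := by
  have hkey : ∀ m : ℕ, m • g = 0 ↔ n ∣ m := by
    intro m
    rw [← hord]
    exact ⟨fun h => addOrderOf_dvd_of_nsmul_eq_zero h, fun h => addOrderOf_dvd_iff_nsmul_eq_zero.mp h⟩
  refine ⟨fun h => by simpa [hn.ne'] using congrArg Multiset.card h, by
    rw [Multiset.sum_replicate]; exact (hkey n).mpr dvd_rfl, ?_⟩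
  rintro ⟨B, C, hB0, hC0, hBs, hCs, hBC⟩
  have hBg : ∀ x ∈ B, x = g := by
    intro x hx
    have : x ∈ Multiset.replicate n g := by rw [hBC]; exact Multiset.mem_of_le (le_add_right _ _) hx
    exact Multiset.eq_of_mem_replicate this
  have hBrep : B = Multiset.replicate (Multiset.card B) g := Multiset.eq_replicate_card.mpr hBg
  have hdvd : n ∣ Multiset.card B := by
    rw [hBrep, Multiset.sum_replicate] at hBs
    exact (hkey _).mp hBs
  have h1 : 0 < Multiset.card B := Multiset.card_pos.mpr hB0
  have h2 : 0 < Multiset.card C := Multiset.card_pos.mpr hC0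
  have hcard : Multiset.card B + Multiset.card C = n := by
    have := congrArg Multiset.card hBC
    simpa using this.symm
  have := Nat.le_of_dvd h1 hdvd
  omega

open Multiset in
private lemma isMin_V {G : Type*} [AddCommGroup G] {g' h' : G} {n m : ℕ}
    (hord : addOrderOf g' = n) (hne : h' ≠ g') (hm : 0 < m) (hmn : m < n)
    (hsum : (m • g') + h' = 0) :
    IsMinZeroSum (Multiset.replicate m g' + {h'}) := by
  classical
  have hkey : ∀ j : ℕ, j • g' = 0 ↔ n ∣ j := by
    intro j
    rw [← hord]
    exact ⟨fun h => addOrderOf_dvd_of_nsmul_eq_zero h,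
      fun h => addOrderOf_dvd_iff_nsmul_eq_zero.mp h⟩
  refine ⟨by simp, by rw [Multiset.sum_add, Multiset.sum_replicate, Multiset.sum_singleton]; exact hsum, ?_⟩
  rintro ⟨B, C, hB0, hC0, hBs, hCs, hBC⟩
  have key : ∀ D E : Multiset G, D + E = Multiset.replicate m g' + {h'} → D ≠ 0 → E ≠ 0 →
      D.sum = 0 → D.count h' = 0 → False := by
    intro D E hDE hD0 hE0 hDs hDh
    have hDg : ∀ x ∈ D, x = g' := by
      intro x hx
      have hxV : x ∈ Multiset.replicate m g' + {h'} := by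
        rw [← hDE]; exact Multiset.mem_of_le (le_add_right _ _) hx
      rcases Multiset.mem_add.mp hxV with h | h
      · exact Multiset.eq_of_mem_replicate h
      · exfalso
        rw [Multiset.mem_singleton] at h
        subst h
        exact absurd hDh (by simp [Multiset.count_eq_zero, hx])
    have hDrep : D = Multiset.replicate (Multiset.card D) g' := Multiset.eq_replicate_card.mpr hDg
    have hdvd : n ∣ Multiset.card D := by
      rw [hDrep, Multiset.sum_replicate] at hDs
      exact (hkey _).mp hDs
    have h1 : 0 < Multiset.card D := Multiset.card_pos.mpr hD0
    have h2 : 0 < Multiset.card E := Multiset.card_pos.mpr hE0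
    have hcard : Multiset.card D + Multiset.card E = m + 1 := by
      have := congrArg Multiset.card hDE
      simpa using this
    have := Nat.le_of_dvd h1 hdvd
    omega
  have hcount : B.count h' + C.count h' = 1 := by
    have := congrArg (Multiset.count h') hBC
    simpa [Multiset.count_replicate, Ne.symm hne] using this.symm
  rcases Nat.eq_zero_or_pos (B.count h') with h | h
  · exact key B C hBC.symm hB0 hC0 hBs h
  · exact key C B (by rw [add_comm]; exact hBC.symm) hC0 hB0 hCs (by omega)

open Multiset in
private lemma atom_classify {G : Type*} [AddCommGroup G] [DecidableEq G] {g : G} {n d : ℕ}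
    (hord : addOrderOf g = n) (hn : 4 ≤ n) (hd₁ : 3 ≤ d) (hd₂ : d + 1 ≤ n)
    {B : Multiset G}
    (hsupp : ∀ x ∈ B, x = g ∨ x = -g ∨ x = (d-1) • g)
    (hcnt : B.count ((d-1) • g) ≤ 1) (hmin : IsMinZeroSum B) :
    B = ({g, -g} : Multiset G) ∨ B = Multiset.replicate n g ∨
      B = Multiset.replicate n (-g) ∨
      B = Multiset.replicate (n-d+1) g + {(d-1) • g} ∨
      B = Multiset.replicate (d-1) (-g) + {(d-1) • g} := by
  obtain ⟨hB0, hBsum, hBmin⟩ := hmin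
  have hkeyZ : ∀ z : ℤ, z • g = 0 ↔ (n:ℤ) ∣ z := fun z => by
    rw [← hord]; exact addOrderOf_dvd_iff_zsmul_eq_zero.symm
  have hkeyN : ∀ m : ℕ, m • g = 0 ↔ n ∣ m := fun m => by
    rw [← natCast_zsmul, hkeyZ, Int.natCast_dvd_natCast]
  have hne : ∀ m : ℕ, 0 < m → m < n → m • g ≠ 0 := fun m h1 h2 hz => by
    have := Nat.le_of_dvd h1 ((hkeyN m).mp hz); omega
  have hg0 : g ≠ 0 := fun hz => hne 1 one_pos (by omega) (by simpa using hz)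
  have hgneg : g ≠ -g := fun hz => by
    exact hne 2 (by omega) (by omega)
      (by rw [two_nsmul]; exact eq_neg_iff_add_eq_zero.mp hz)
  have hhg : (d-1) • g ≠ g := fun hz => by
    apply hne (d-2) (by omega) (by omega)
    have h1 : ((d-1:ℕ):ℤ) • g = (1:ℤ) • g := by
      rw [natCast_zsmul, hz, one_zsmul]
    have h2 : (((d-1:ℕ):ℤ) - 1) • g = 0 := by rw [sub_zsmul, h1]; simp
    have h3 : ((d-2:ℕ):ℤ) = ((d-1:ℕ):ℤ) - 1 := by omega
    rw [← natCast_zsmul, h3, h2]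
  have hhneg : (d-1) • g ≠ -g := fun hz => by
    apply hne d (by omega) (by omega)
    have h1 : (d-1) • g + g = 0 := by rw [hz, neg_add_cancel]
    have h2 : d = (d-1) + 1 := by omega
    rw [h2, succ_nsmul, h1]
  have hh0 : (d-1) • g ≠ 0 := hne (d-1) (by omega) (by omega)
  have hdec : B = Multiset.replicate (B.count g) g + Multiset.replicate (B.count (-g)) (-g) +
      Multiset.replicate (B.count ((d-1) • g)) ((d-1) • g) :=
    decomp3 hgneg (Ne.symm hhg) (Ne.symm hhneg) hsupp
  set i := B.count g with hi
  set j := B.count (-g) with hj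
  set r := B.count ((d-1) • g) with hr
  have hsumB : B.sum = ((i:ℤ) - j + r * ((d-1:ℕ):ℤ)) • g := by
    rw [hdec, Multiset.sum_add, Multiset.sum_add, Multiset.sum_replicate,
      Multiset.sum_replicate, Multiset.sum_replicate]
    module
  have hzero : (n:ℤ) ∣ ((i:ℤ) - j + r * ((d-1:ℕ):ℤ)) :=
    (hkeyZ _).mp (by rw [← hsumB]; exact hBsum)
  have split : ∀ C : Multiset G, C ≤ B → C ≠ 0 → C ≠ B → C.sum = 0 → False := by
    intro C hle hC0 hCB hCs
    apply hBmin
    refine ⟨C, B - C, hC0, ?_, hCs, ?_, ?_⟩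
    · intro hz
      apply hCB
      have h4 := tsub_add_cancel_of_le hle
      rw [hz, zero_add] at h4
      exact h4
    · have hBC : C + (B - C) = B := by rw [add_comm]; exact tsub_add_cancel_of_le hle
      have h5 := congrArg Multiset.sum hBC
      rw [Multiset.sum_add, hCs, zero_add] at h5
      rw [h5]; exact hBsum
    · rw [add_comm]; exact (tsub_add_cancel_of_le hle).symm
  have hcpair : ∀ a : G, Multiset.count a ({g, -g} : Multiset G)
      = (if a = g then 1 else 0) + (if a = -g then 1 else 0) := by
    intro a
    show Multiset.count a (g ::ₘ {-g}) = _
    rw [Multiset.count_cons, Multiset.count_singleton]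
    omega
  have hij : B = ({g, -g} : Multiset G) ∨ i = 0 ∨ j = 0 := by
    by_contra hcon
    push_neg at hcon
    obtain ⟨hP, hi1, hj1⟩ := hcon
    have hle : ({g, -g} : Multiset G) ≤ B := by
      rw [Multiset.le_iff_count]
      intro a
      rw [hcpair a]
      by_cases h1 : a = g
      · subst h1; simp [hgneg]; omega
      · by_cases h2 : a = -g
        · subst h2; simp [Ne.symm hgneg]; omega
        · simp [h1, h2]
    exact split _ hle (by simp) (fun hz => hP hz.symm) (by simp)
  have hrepl : ∀ x : G, (x = g ∨ x = -g) → n ≤ B.count x → B = Multiset.replicate n x := by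
    intro x hx hnx
    have hxsum : (Multiset.replicate n x).sum = 0 := by
      rw [Multiset.sum_replicate]
      rcases hx with rfl | rfl
      · exact (hkeyN n).mpr dvd_rfl
      · have h6 : addOrderOf (-g) = n := by rw [addOrderOf_neg]; exact hord
        rw [← h6]; exact addOrderOf_nsmul_eq_zero _
    have hle : Multiset.replicate n x ≤ B := by
      rw [Multiset.le_iff_count]
      intro a
      rw [Multiset.count_replicate]
      split
      · next h => subst h; exact hnx
      · exact Nat.zero_le _
    by_cases hEq : Multiset.replicate n x = B
    · exact hEq.symm
    · exact absurd (split _ hle (fun hz => by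
        have := congrArg Multiset.card hz; simp at this; omega) hEq hxsum) not_false
  have hrcase : r = 0 ∨ r = 1 := by omega
  rcases hrcase with hr0 | hr1
  · -- no h in B
    rcases hij with hB | hi0 | hj0
    · exact Or.inl hB
    · -- i = 0 : B = replicate j (-g)
      have hdvd : n ∣ j := by
        rw [hi0, hr0] at hzero
        push_cast at hzero
        rw [zero_sub, zero_mul, add_zero, dvd_neg] at hzero
        exact_mod_cast hzero
      have hj1 : j ≠ 0 := by
        intro hz
        apply hB0
        rw [hdec, hi0, hz, hr0]
        simp
      have : n ≤ j := Nat.le_of_dvd (by omega) hdvd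
      exact Or.inr (Or.inr (Or.inl (hrepl (-g) (Or.inr rfl) this)))
    · have hdvd : n ∣ i := by
        rw [hj0, hr0] at hzero
        push_cast at hzero
        rw [zero_mul, add_zero, sub_zero] at hzero
        exact_mod_cast hzero
      have hi1 : i ≠ 0 := by
        intro hz
        apply hB0
        rw [hdec, hj0, hz, hr0]
        simp
      have : n ≤ i := Nat.le_of_dvd (by omega) hdvd
      exact Or.inr (Or.inl (hrepl g (Or.inl rfl) this))
  · -- r = 1
    have hBnotpair : B ≠ ({g, -g} : Multiset G) := by
      intro hz
      have := hcpair ((d-1) • g)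
      rw [← hz] at this
      rw [← hr] at this
      simp [hhg, hhneg] at this
      omega
    have hij2 : i = 0 ∨ j = 0 := by
      rcases hij with hB | h | h
      · exact absurd hB hBnotpair
      · exact Or.inl h
      · exact Or.inr h
    have hilt : i < n := by
      by_contra hge
      push_neg at hge
      have hB' := hrepl g (Or.inl rfl) hge
      have h8 : Multiset.count ((d-1) • g) B = 1 := by rw [← hr]; exact hr1
      rw [hB', Multiset.count_replicate, if_neg (Ne.symm hhg)] at h8
      omega
    have hjlt : j < n := by
      by_contra hge
      push_neg at hge
      have hB' := hrepl (-g) (Or.inr rfl) hge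
      have h8 : Multiset.count ((d-1) • g) B = 1 := by rw [← hr]; exact hr1
      rw [hB', Multiset.count_replicate, if_neg (Ne.symm hhneg)] at h8
      omega
    rcases hij2 with hi0 | hj0
    · -- i = 0, j = d - 1
      have heq : ((i:ℤ) - j + r * ((d-1:ℕ):ℤ)) = ((d-1:ℕ):ℤ) - j := by
        rw [hi0, hr1]; push_cast; ring
      have hdvd : (n:ℤ) ∣ ((d-1:ℕ):ℤ) - j := heq ▸ hzero
      have hz0 : ((d-1:ℕ):ℤ) - j = 0 :=
        Int.eq_zero_of_dvd_of_natAbs_lt_natAbs hdvd (by omega)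
      have hjval : j = d - 1 := by omega
      refine Or.inr (Or.inr (Or.inr (Or.inr ?_)))
      rw [hdec, hi0, hjval, hr1]
      simp
    · -- j = 0, i = n - d + 1
      have heq : ((i:ℤ) - j + r * ((d-1:ℕ):ℤ)) = ((i + (d-1) : ℕ) : ℤ) := by
        rw [hj0, hr1]; push_cast; ring
      have hdvd : n ∣ (i + (d-1)) := by
        rw [← Int.natCast_dvd_natCast]
        exact heq ▸ hzero
      have hi1 : i ≠ 0 := by
        intro hz
        rw [hz, zero_add] at hdvd
        have := Nat.le_of_dvd (by omega) hdvd
        omega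
      have hival : i = n - d + 1 := by
        obtain ⟨m, hm⟩ := hdvd
        have hm1 : m ≠ 0 := by
          intro hz; rw [hz, mul_zero] at hm; omega
        have hm2 : m < 2 := by
          by_contra hge
          push_neg at hge
          have : n * 2 ≤ n * m := Nat.mul_le_mul_left n hge
          omega
        have : m = 1 := by omega
        rw [this, mul_one] at hm
        omega
      refine Or.inr (Or.inr (Or.inr (Or.inl ?_)))
      rw [hdec, hj0, hival, hr1]
      simp

open Multiset in
/-- **Proposition 3.6.1.** Let `G` be cyclic of order `n ≥ 4` and `d ∈ [3, n-1]`. For each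
`k ∈ ℕ₀`, the set `(2k+2) + {0, d-2} + {ν(n-2) : ν ∈ [0,k]}` lies in `𝓛(G)`. -/
theorem stmt_8 (G : Type*) [AddCommGroup G] (n : ℕ) (hcyc : IsAddCyclic G)
    (hcard : Nat.card G = n) (hn : 4 ≤ n) (d : ℕ) (hd₁ : 3 ≤ d) (hd₂ : d ≤ n - 1)
    (k : ℕ) :
    {x : ℕ | ∃ i ∈ ({0, d - 2} : Set ℕ),
        ∃ ν : ℕ, ν ≤ k ∧ x = 2 * k + 2 + i + ν * (n - 2)}
      ∈ lengthSystem G := by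
  classical
  have hfin : Finite G := Nat.finite_of_card_ne_zero (by omega)
  obtain ⟨g, hg⟩ := IsAddCyclic.exists_generator (α := G)
  have hord : addOrderOf g = n := by
    rw [addOrderOf_eq_card_of_forall_mem_zmultiples hg, hcard]
  have hd₂' : d + 1 ≤ n := by omega
  -- basic arithmetic facts about g
  have hkeyZ : ∀ z : ℤ, z • g = 0 ↔ (n:ℤ) ∣ z := fun z => by
    rw [← hord]; exact addOrderOf_dvd_iff_zsmul_eq_zero.symm
  have hkeyN : ∀ m : ℕ, m • g = 0 ↔ n ∣ m := fun m => by
    rw [← natCast_zsmul, hkeyZ, Int.natCast_dvd_natCast]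
  have hne : ∀ m : ℕ, 0 < m → m < n → m • g ≠ 0 := fun m h1 h2 hz => by
    have := Nat.le_of_dvd h1 ((hkeyN m).mp hz); omega
  have hg0 : g ≠ 0 := fun hz => hne 1 one_pos (by omega) (by simpa using hz)
  have hgneg : g ≠ -g := fun hz => by
    exact hne 2 (by omega) (by omega)
      (by rw [two_nsmul]; exact eq_neg_iff_add_eq_zero.mp hz)
  have hhg : (d-1) • g ≠ g := fun hz => by
    apply hne (d-2) (by omega) (by omega)
    have h1 : ((d-1:ℕ):ℤ) • g = (1:ℤ) • g := by
      rw [natCast_zsmul, hz, one_zsmul]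
    have h2 : (((d-1:ℕ):ℤ) - 1) • g = 0 := by rw [sub_zsmul, h1]; simp
    have h3 : ((d-2:ℕ):ℤ) = ((d-1:ℕ):ℤ) - 1 := by omega
    rw [← natCast_zsmul, h3, h2]
  have hhneg : (d-1) • g ≠ -g := fun hz => by
    apply hne d (by omega) (by omega)
    have h1 : (d-1) • g + g = 0 := by rw [hz, neg_add_cancel]
    have h2 : d = (d-1) + 1 := by omega
    rw [h2, succ_nsmul, h1]
  have hh0 : (d-1) • g ≠ 0 := hne (d-1) (by omega) (by omega)
  have hordneg : addOrderOf (-g) = n := by rw [addOrderOf_neg]; exact hord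
  have hkeyNneg : ∀ m : ℕ, m • (-g) = 0 ↔ n ∣ m := fun m => by
    rw [← hordneg]
    exact ⟨fun h => addOrderOf_dvd_of_nsmul_eq_zero h,
      fun h => addOrderOf_dvd_iff_nsmul_eq_zero.mp h⟩
  set h : G := (d-1) • g with hhdef
  set pair : Multiset G := {g, -g} with hpair
  set Ug : Multiset G := Multiset.replicate n g with hUg
  set Umg : Multiset G := Multiset.replicate n (-g) with hUmg
  set V1 : Multiset G := Multiset.replicate (n-d+1) g + {h} with hV1
  set V2 : Multiset G := Multiset.replicate (d-1) (-g) + {h} with hV2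
  set A : Multiset G := Multiset.replicate ((k+1)*n) g +
    Multiset.replicate (k*n+(d-1)) (-g) + {h} with hA
  -- counts in A
  have hAg : Multiset.count g A = (k+1)*n := by
    rw [hA, count_add, count_add, count_replicate, count_replicate, count_singleton,
      if_pos rfl, if_neg (Ne.symm hgneg), if_neg (Ne.symm hhg)]
    omega
  have hAmg : Multiset.count (-g) A = k*n + (d-1) := by
    rw [hA, count_add, count_add, count_replicate, count_replicate, count_singleton,
      if_neg hgneg, if_pos rfl, if_neg (Ne.symm hhneg)]
    omega
  have hAh : Multiset.count h A = 1 := by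
    rw [hA, count_add, count_add, count_replicate, count_replicate, count_singleton,
      if_neg (Ne.symm hhg), if_neg (Ne.symm hhneg), if_pos rfl]
  -- counts in atoms
  have hcpair : ∀ a : G, Multiset.count a pair
      = (if a = g then 1 else 0) + (if a = -g then 1 else 0) := by
    intro a
    rw [hpair]
    show Multiset.count a (g ::ₘ {-g}) = _
    rw [Multiset.count_cons, Multiset.count_singleton]
    omega
  have hPg : Multiset.count g pair = 1 := by rw [hcpair, if_pos rfl, if_neg hgneg]
  have hPmg : Multiset.count (-g) pair = 1 := by
    rw [hcpair, if_neg (Ne.symm hgneg), if_pos rfl]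
  have hPh : Multiset.count h pair = 0 := by rw [hcpair, if_neg hhg, if_neg hhneg]
  have hUgg : Multiset.count g Ug = n := by rw [hUg, count_replicate, if_pos rfl]
  have hUgmg : Multiset.count (-g) Ug = 0 := by
    rw [hUg, count_replicate, if_neg hgneg]
  have hUgh : Multiset.count h Ug = 0 := by rw [hUg, count_replicate, if_neg (Ne.symm hhg)]
  have hUmgg : Multiset.count g Umg = 0 := by rw [hUmg, count_replicate, if_neg (Ne.symm hgneg)]
  have hUmgmg : Multiset.count (-g) Umg = n := by rw [hUmg, count_replicate, if_pos rfl]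
  have hUmgh : Multiset.count h Umg = 0 := by rw [hUmg, count_replicate, if_neg (Ne.symm hhneg)]
  have hV1g : Multiset.count g V1 = n-d+1 := by
    rw [hV1, count_add, count_replicate, count_singleton, if_pos rfl, if_neg (Ne.symm hhg)]
  have hV1mg : Multiset.count (-g) V1 = 0 := by
    rw [hV1, count_add, count_replicate, count_singleton, if_neg hgneg,
      if_neg (Ne.symm hhneg)]
  have hV1h : Multiset.count h V1 = 1 := by
    rw [hV1, count_add, count_replicate, count_singleton, if_neg (Ne.symm hhg), if_pos rfl]
  have hV2g : Multiset.count g V2 = 0 := by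
    rw [hV2, count_add, count_replicate, count_singleton, if_neg (Ne.symm hgneg), if_neg (Ne.symm hhg)]
  have hV2mg : Multiset.count (-g) V2 = d-1 := by
    rw [hV2, count_add, count_replicate, count_singleton, if_pos rfl, if_neg (Ne.symm hhneg)]
    omega
  have hV2h : Multiset.count h V2 = 1 := by
    rw [hV2, count_add, count_replicate, count_singleton, if_neg (Ne.symm hhneg), if_pos rfl]
  -- minimality of atoms
  have hminpair : IsMinZeroSum pair := isMin_pair hg0
  have hminUg : IsMinZeroSum Ug := isMin_repl hord (by omega)
  have hminUmg : IsMinZeroSum Umg := isMin_repl hordneg (by omega)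
  have hminV1 : IsMinZeroSum V1 := by
    refine isMin_V hord hhg (by omega) (by omega) ?_
    rw [hhdef, ← add_nsmul]
    have h1 : (n-d+1) + (d-1) = n := by omega
    rw [h1]
    exact (hkeyN n).mpr dvd_rfl
  have hminV2 : IsMinZeroSum V2 := by
    refine isMin_V hordneg hhneg (by omega) (by omega) ?_
    rw [hhdef]
    have h1 : (d-1) • (-g) + (d-1) • g = (d-1) • (-g + g) := (nsmul_add (-g) g (d-1)).symm
    rw [h1, neg_add_cancel, nsmul_zero]
  -- A is a zero-sum sequence
  have hAsum : A.sum = 0 := by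
    have h1 : A.sum = ((((k+1)*n : ℕ):ℤ) - ((k*n+(d-1):ℕ):ℤ) + ((d-1:ℕ):ℤ)) • g := by
      rw [hA, Multiset.sum_add, Multiset.sum_add, Multiset.sum_replicate,
        Multiset.sum_replicate, Multiset.sum_singleton, hhdef]
      module
    rw [h1, hkeyZ]
    have h2 : (((k+1)*n : ℕ):ℤ) - ((k*n+(d-1):ℕ):ℤ) + ((d-1:ℕ):ℤ) = (n:ℤ) := by
      push_cast
      have h3 : ((d:ℤ) - 1) = ((d-1:ℕ):ℤ) := by omega
      rw [← h3]
      ring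
    rw [h2]
  refine ⟨A, hAsum, ?_⟩
  ext K
  simp only [lengthSet, Set.mem_setOf_eq]
  constructor
  · rintro ⟨f, hcardf, hatoms, hsumf⟩
    -- every element of every atom lies in {g, -g, h}
    have hsupp : ∀ B ∈ f, ∀ x ∈ B, x = g ∨ x = -g ∨ x = h := by
      intro B hB x hx
      have hxA : x ∈ A := by
        rw [← hsumf]
        exact Multiset.mem_of_le (Multiset.le_sum_of_mem hB) hx
      rw [hA] at hxA
      rcases Multiset.mem_add.mp hxA with h1 | h1
      · rcases Multiset.mem_add.mp h1 with h2 | h2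
        · exact Or.inl (Multiset.eq_of_mem_replicate h2)
        · exact Or.inr (Or.inl (Multiset.eq_of_mem_replicate h2))
      · exact Or.inr (Or.inr (Multiset.mem_singleton.mp h1))
    have hcount : ∀ a : G, (f.map fun B => Multiset.count a B).sum = Multiset.count a A := by
      intro a
      calc (f.map fun B => Multiset.count a B).sum
          = Multiset.count a ((f.map id).sum) := (Multiset.count_sum).symm
        _ = Multiset.count a f.sum := by rw [Multiset.map_id]
        _ = Multiset.count a A := by rw [hsumf]
    -- locate the atom containing h
    have hex : ∃ B ∈ f, Multiset.count h B ≠ 0 := by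
      by_contra hcon
      push_neg at hcon
      have h1 : (f.map fun B => Multiset.count h B).sum = 0 := by
        apply Multiset.sum_eq_zero
        intro x hx
        obtain ⟨B, hB, rfl⟩ := Multiset.mem_map.mp hx
        exact hcon B hB
      rw [hcount h, hAh] at h1
      omega
    obtain ⟨B₀, hB₀f, hB₀h⟩ := hex
    obtain ⟨f', rfl⟩ := Multiset.exists_cons_of_mem hB₀f
    have hsplit : Multiset.count h B₀ + (f'.map fun B => Multiset.count h B).sum = 1 := by
      have h1 := hcount h
      rw [Multiset.map_cons, Multiset.sum_cons, hAh] at h1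
      exact h1
    have hB₀h1 : Multiset.count h B₀ = 1 := by omega
    have hf'h : ∀ B ∈ f', Multiset.count h B = 0 := by
      intro B hB
      have h1 : (f'.map fun B => Multiset.count h B).sum = 0 := by omega
      have h2 := Multiset.all_zero_of_le_zero_le_of_sum_eq_zero
        (fun x _ => Nat.zero_le x) h1
      exact h2 _ (Multiset.mem_map_of_mem _ hB)
    have hclass : ∀ B ∈ (B₀ ::ₘ f'), B = pair ∨ B = Ug ∨ B = Umg ∨ B = V1 ∨ B = V2 := by
      intro B hB
      have hcnt : Multiset.count h B ≤ 1 := by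
        rcases Multiset.mem_cons.mp hB with rfl | hB'
        · omega
        · rw [hf'h B hB']; omega
      exact atom_classify hord hn hd₁ hd₂' (hsupp B hB) hcnt (hatoms B hB)
    have hB₀class : B₀ = V1 ∨ B₀ = V2 := by
      rcases hclass B₀ (Multiset.mem_cons_self _ _) with h1 | h1 | h1 | h1 | h1
      · rw [h1, hPh] at hB₀h1; omega
      · rw [h1] at hB₀h1; rw [hUgh] at hB₀h1; omega
      · rw [h1] at hB₀h1; rw [hUmgh] at hB₀h1; omega
      · exact Or.inl h1
      · exact Or.inr h1
    have hf'class : ∀ B ∈ f', B = pair ∨ B = Ug ∨ B = Umg := by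
      intro B hB
      rcases hclass B (Multiset.mem_cons_of_mem hB) with h1 | h1 | h1 | h1 | h1
      · exact Or.inl h1
      · exact Or.inr (Or.inl h1)
      · exact Or.inr (Or.inr h1)
      · exfalso
        have hx := hf'h B hB
        rw [h1, hV1h] at hx
        omega
      · exfalso
        have hx := hf'h B hB
        rw [h1, hV2h] at hx
        omega
    -- distinctness of the three atom types
    have hpairUg : pair ≠ Ug := by
      intro h1
      have := congrArg Multiset.card h1
      rw [hpair, hUg, Multiset.card_replicate] at this
      simp at this
      omega
    have hpairUmg : pair ≠ Umg := by
      intro h1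
      have := congrArg Multiset.card h1
      rw [hpair, hUmg, Multiset.card_replicate] at this
      simp at this
      omega
    have hUgUmg : Ug ≠ Umg := by
      intro h1
      have := congrArg (Multiset.count g) h1
      rw [hUgg, hUmgg] at this
      omega
    have hf'dec : f' = Multiset.replicate (f'.count pair) pair +
        Multiset.replicate (f'.count Ug) Ug + Multiset.replicate (f'.count Umg) Umg :=
      decomp3 hpairUg hpairUmg hUgUmg hf'class
    set cP := f'.count pair with hcP
    set cU := f'.count Ug with hcU
    set cV := f'.count Umg with hcV
    have hcard' : K = 1 + (cP + cU + cV) := by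
      rw [← hcardf, Multiset.card_cons]
      have h1 := congrArg Multiset.card hf'dec
      rw [Multiset.card_add, Multiset.card_add, Multiset.card_replicate,
        Multiset.card_replicate, Multiset.card_replicate] at h1
      omega
    have hcnteq : ∀ a : G, Multiset.count a B₀ +
        (cP * Multiset.count a pair + cU * Multiset.count a Ug +
          cV * Multiset.count a Umg) = Multiset.count a A := by
      intro a
      have h1 : Multiset.count a (B₀ ::ₘ f').sum = Multiset.count a A := by rw [hsumf]
      rw [Multiset.sum_cons, Multiset.count_add] at h1
      nth_rewrite 1 [hf'dec] at h1
      rw [Multiset.sum_add, Multiset.sum_add, Multiset.sum_replicate, Multiset.sum_replicate,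
        Multiset.sum_replicate, Multiset.count_add, Multiset.count_add,
        Multiset.count_nsmul, Multiset.count_nsmul, Multiset.count_nsmul] at h1
      omega
    -- the two equations
    have hEg := hcnteq g
    have hEmg := hcnteq (-g)
    rw [hAg, hPg, hUgg, hUmgg] at hEg
    rw [hAmg, hPmg, hUgmg, hUmgmg] at hEmg
    -- product preparation
    have p1 : (k+1)*n = k*n + n := by ring
    have p2 : cU * (n-2) + cU * 2 = cU * n := by rw [← Nat.mul_add]; congr 1; omega
    have p3 : cV * (n-2) + cV * 2 = cV * n := by rw [← Nat.mul_add]; congr 1; omega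
    have p4 : k * (n-2) + k * 2 = k * n := by rw [← Nat.mul_add]; congr 1; omega
    rcases hB₀class with hB₀ | hB₀
    · -- B₀ = V1
      rw [hB₀, hV1g] at hEg
      rw [hB₀, hV1mg] at hEmg
      -- hEg : (n-d+1) + (cP*1 + cU*n + cV*0) = (k+1)*n
      -- hEmg : 0 + (cP*1 + cU*0 + cV*n) = k*n + (d-1)
      have hcUcV : cU * n = cV * n := by omega
      have hcUeq : cU = cV := Nat.eq_of_mul_eq_mul_right (by omega) hcUcV
      have hcUk : cU ≤ k := by
        by_contra hgt
        push_neg at hgt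
        have : (k+1) * n ≤ cU * n := Nat.mul_le_mul_right n hgt
        omega
      refine ⟨d-2, by right; rfl, k - cU, by omega, ?_⟩
      have p5 : (k - cU) * (n-2) + cU * (n-2) = k * (n-2) := by
        rw [← Nat.add_mul]; congr 1; omega
      omega
    · -- B₀ = V2
      rw [hB₀, hV2g] at hEg
      rw [hB₀, hV2mg] at hEmg
      have hcUcV : cU * n = cV * n + n := by omega
      have hcUeq : cU = cV + 1 := by
        have h1 : cU * n = (cV + 1) * n := by rw [Nat.add_mul, one_mul]; omega
        exact Nat.eq_of_mul_eq_mul_right (by omega) h1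
      have hcVk : cV ≤ k := by
        by_contra hgt
        push_neg at hgt
        have : (k+1) * n ≤ cV * n := Nat.mul_le_mul_right n hgt
        omega
      refine ⟨0, by left; rfl, k - cV, by omega, ?_⟩
      have p5 : (k - cV) * (n-2) + cV * (n-2) = k * (n-2) := by
        rw [← Nat.add_mul]; congr 1; omega
      omega
  · rintro ⟨i, hi, ν, hν, rfl⟩
    have e0 : (k+1)*n = k*n + n := by ring
    have e2 : (k-ν)*n + ν*n = k*n := by rw [← Nat.add_mul]; congr 1; omega
    have e1 : (k-ν+1)*n + ν*n = (k+1)*n := by rw [← Nat.add_mul]; congr 1; omega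
    have eb : ν*(n-2) + ν*2 = ν*n := by rw [← Nat.mul_add]; congr 1; omega
    rcases hi with hi | hi
    · -- i = 0
      subst hi
      refine ⟨V2 ::ₘ (Multiset.replicate (k-ν+1) Ug + Multiset.replicate (k-ν) Umg +
        Multiset.replicate (ν*n) pair), ?_, ?_, ?_⟩
      · rw [Multiset.card_cons, Multiset.card_add, Multiset.card_add,
          Multiset.card_replicate, Multiset.card_replicate, Multiset.card_replicate]
        omega
      · intro B hB
        rcases Multiset.mem_cons.mp hB with rfl | hB'
        · exact hminV2
        · rcases Multiset.mem_add.mp hB' with h1 | h1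
          · rcases Multiset.mem_add.mp h1 with h2 | h2
            · rw [Multiset.eq_of_mem_replicate h2]; exact hminUg
            · rw [Multiset.eq_of_mem_replicate h2]; exact hminUmg
          · rw [Multiset.eq_of_mem_replicate h1]; exact hminpair
      · ext a
        simp only [Multiset.sum_cons, Multiset.sum_add, Multiset.sum_replicate, hV2, hUg,
          hUmg, hpair, hA, hhdef, Multiset.insert_eq_cons, Multiset.count_add,
          Multiset.count_nsmul, Multiset.count_replicate, Multiset.count_singleton,
          Multiset.count_cons]
        by_cases h1 : a = g
        · rw [h1]
          simp only [if_pos rfl, if_neg hgneg, if_neg (Ne.symm hgneg), if_neg hhg,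
            if_neg (Ne.symm hhg), reduceIte]
          omega
        · by_cases h2 : a = -g
          · rw [h2]
            simp only [if_pos rfl, if_neg hgneg, if_neg (Ne.symm hgneg), if_neg hhneg,
              if_neg (Ne.symm hhneg), reduceIte]
            omega
          · by_cases h3 : a = (d-1) • g
            · rw [h3]
              simp only [if_pos rfl, if_neg hhg, if_neg (Ne.symm hhg), if_neg hhneg,
                if_neg (Ne.symm hhneg), reduceIte]
              simp only [show ¬ (g = (d-1) • g) from fun e => hhg e.symm, show ¬ (-g = (d-1) • g) from fun e => hhneg e.symm, show ¬ ((d-1) • g = g) from hhg, show ¬ ((d-1) • g = -g) from hhneg, if_false, reduceIte]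
              omega
            · simp only [if_neg h1, if_neg (Ne.symm h1), if_neg h2, if_neg (Ne.symm h2),
                if_neg h3, if_neg (Ne.symm h3), reduceIte]
              simp
    · -- i = d - 2
      subst hi
      refine ⟨V1 ::ₘ (Multiset.replicate (k-ν) Ug + Multiset.replicate (k-ν) Umg +
        Multiset.replicate (ν*n + (d-1)) pair), ?_, ?_, ?_⟩
      · rw [Multiset.card_cons, Multiset.card_add, Multiset.card_add,
          Multiset.card_replicate, Multiset.card_replicate, Multiset.card_replicate]
        omega
      · intro B hB
        rcases Multiset.mem_cons.mp hB with rfl | hB'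
        · exact hminV1
        · rcases Multiset.mem_add.mp hB' with h1 | h1
          · rcases Multiset.mem_add.mp h1 with h2 | h2
            · rw [Multiset.eq_of_mem_replicate h2]; exact hminUg
            · rw [Multiset.eq_of_mem_replicate h2]; exact hminUmg
          · rw [Multiset.eq_of_mem_replicate h1]; exact hminpair
      · ext a
        simp only [Multiset.sum_cons, Multiset.sum_add, Multiset.sum_replicate, hV1, hUg,
          hUmg, hpair, hA, hhdef, Multiset.insert_eq_cons, Multiset.count_add,
          Multiset.count_nsmul, Multiset.count_replicate, Multiset.count_singleton,
          Multiset.count_cons]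
        by_cases h1 : a = g
        · rw [h1]
          simp only [if_pos rfl, if_neg hgneg, if_neg (Ne.symm hgneg), if_neg hhg,
            if_neg (Ne.symm hhg), reduceIte]
          omega
        · by_cases h2 : a = -g
          · rw [h2]
            simp only [if_pos rfl, if_neg hgneg, if_neg (Ne.symm hgneg), if_neg hhneg,
              if_neg (Ne.symm hhneg), reduceIte]
            omega
          · by_cases h3 : a = (d-1) • g
            · rw [h3]
              simp only [if_pos rfl, if_neg hhg, if_neg (Ne.symm hhg), if_neg hhneg,
                if_neg (Ne.symm hhneg), reduceIte]
              simp only [show ¬ (g = (d-1) • g) from fun e => hhg e.symm, show ¬ (-g = (d-1) • g) from fun e => hhneg e.symm, show ¬ ((d-1) • g = g) from hhg, show ¬ ((d-1) • g = -g) from hhneg, if_false, reduceIte]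
              omega
            · simp only [if_neg h1, if_neg (Ne.symm h1), if_neg h2, if_neg (Ne.symm h2),
                if_neg h3, if_neg (Ne.symm h3), reduceIte]
              simp
end

section
/- Let G be a finite abelian group, g ∈ G with ord(g) = n ≥ 5, and B ∈ ℬ(G) such that both g and −g occur in B with multiplicity at least 2n. Suppose 𝖫(B) is an AAMP with difference n−2 and period {0, d, n−2} for some d ∈ [1, n−3] with d ≠ (n−2)/2 and some bound M ∈ ℕ₀. Then: (1) every submultiset S of B that is an atom of ℬ_{⟨g⟩}(G) satisfies σ(S) ∈ {0, g, −g, (d+1)g, −(d+1)g}; (2) if S₁ and S₂ are atoms of ℬ_{⟨g⟩}(G) whose union is a submultiset of B, then σ(S_i) ∈ {0, g, −g} for at least one i ∈ {1, 2}. -/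
section helpers
variable {G : Type*} [AddCommGroup G]

lemma isMinZeroSum_of {A : Multiset G} (h0 : A ≠ 0) (hs : A.sum = 0)
    (hmin : ∀ T : Multiset G, T ≤ A → T.sum = 0 → T = 0 ∨ T = A) :
    IsMinZeroSum A := by
  refine ⟨h0, hs, ?_⟩
  rintro ⟨C, D, hC, hD, hCs, hDs, rfl⟩
  rcases hmin C (Multiset.le_add_right _ _) hCs with h | h
  · exact hC h
  · have hcard := congrArg Multiset.card h
    rw [Multiset.card_add] at hcard
    exact hD (Multiset.card_eq_zero.mp (by omega))

lemma factor_exists : ∀ C : Multiset G, C.sum = 0 →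
    ∃ f : Multiset (Multiset G), (∀ A ∈ f, IsMinZeroSum A) ∧ f.sum = C := by
  intro C
  induction C using Multiset.strongInductionOn with
  | _ C ih =>
    intro hC
    by_cases h0 : C = 0
    · exact ⟨0, by simp, by simp [h0]⟩
    by_cases hatom : IsMinZeroSum C
    · exact ⟨{C}, by simpa, by simp⟩
    · have hdec : ∃ A B : Multiset G, A ≠ 0 ∧ B ≠ 0 ∧ A.sum = 0 ∧ B.sum = 0 ∧ C = A + B := by
        by_contra h
        exact hatom ⟨h0, hC, h⟩
      obtain ⟨A, B, hA0, hB0, hAs, hBs, rfl⟩ := hdec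
      have hA : A < A + B := lt_add_of_pos_right _ (Multiset.lt_iff_cons_le.mpr
        ⟨B.toList.head (by simpa using hB0), by
          rw [Multiset.cons_zero, Multiset.singleton_le]
          exact Multiset.mem_toList.mp (List.head_mem _)⟩)
      have hB : B < A + B := lt_add_of_pos_left _ (Multiset.lt_iff_cons_le.mpr
        ⟨A.toList.head (by simpa using hA0), by
          rw [Multiset.cons_zero, Multiset.singleton_le]
          exact Multiset.mem_toList.mp (List.head_mem _)⟩)
      obtain ⟨fA, hfA, hfAs⟩ := ih A hA hAs
      obtain ⟨fB, hfB, hfBs⟩ := ih B hB hBs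
      refine ⟨fA + fB, ?_, by rw [Multiset.sum_add, hfAs, hfBs]⟩
      intro X hX
      rcases Multiset.mem_add.mp hX with h | h
      exacts [hfA X h, hfB X h]

lemma sub_split {T A B : Multiset G} (h : T ≤ A + B) :
    ∃ T₁ T₂ : Multiset G, T₁ ≤ A ∧ T₂ ≤ B ∧ T = T₁ + T₂ := by
  classical
  refine ⟨T ∩ A, T - T ∩ A, Multiset.inter_le_right, ?_, ?_⟩
  · rw [Multiset.le_iff_count]
    intro a
    have hc := Multiset.count_le_of_le a h
    rw [Multiset.count_add] at hc
    rw [Multiset.count_sub, Multiset.count_inter]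
    omega
  · rw [add_comm]
    exact (tsub_add_cancel_of_le Multiset.inter_le_left).symm

lemma le_replicate {T : Multiset G} {k : ℕ} {x : G} (h : T ≤ Multiset.replicate k x) :
    ∃ i, i ≤ k ∧ T = Multiset.replicate i x := by
  refine ⟨Multiset.card T, ?_, ?_⟩
  · simpa using Multiset.card_le_card h
  · rw [Multiset.eq_replicate_card]
    intro b hb
    have := Multiset.mem_of_le h hb
    simpa [Multiset.eq_of_mem_replicate] using Multiset.eq_of_mem_replicate this

lemma nat_dvd_le {m x : ℕ} (h : m ∣ x) (hx : x ≤ m) : x = 0 ∨ x = m := by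
  rcases Nat.eq_zero_or_pos x with h0 | hpos
  · exact Or.inl h0
  · exact Or.inr (le_antisymm hx (Nat.le_of_dvd hpos h))

lemma nat_dvd_lt2 {m x : ℕ} (hm : 0 < m) (h : m ∣ x) (h1 : 0 < x) (h2 : x < 2 * m) : x = m := by
  have hle : m ≤ x := Nat.le_of_dvd h1 h
  have : m ∣ x - m := Nat.dvd_sub h dvd_rfl
  have := Nat.eq_zero_of_dvd_of_lt this (by omega)
  omega

lemma atom_replicate {g : G} {n : ℕ} (hord : addOrderOf g = n) (hn : 1 ≤ n) :
    IsMinZeroSum (Multiset.replicate n g) := by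
  apply isMinZeroSum_of
  · intro h
    have := congrArg Multiset.card h
    simp at this
    omega
  · rw [Multiset.sum_replicate, ← hord]
    exact addOrderOf_nsmul_eq_zero g
  · intro T hT hTs
    obtain ⟨i, hik, rfl⟩ := le_replicate hT
    rw [Multiset.sum_replicate] at hTs
    have hdvd : n ∣ i := hord ▸ addOrderOf_dvd_iff_nsmul_eq_zero.mpr hTs
    rcases nat_dvd_le hdvd hik with h | h <;> simp [h]

lemma atom_pair {g : G} (h1 : g ≠ 0) (h2 : g + g ≠ 0) : IsMinZeroSum ({g, -g} : Multiset G) := by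
  apply isMinZeroSum_of
  · simp
  · simp
  · intro T hT hTs
    have hT' : T ≤ ({g} : Multiset G) + {-g} := by
      rwa [Multiset.singleton_add]
    obtain ⟨T₁, T₂, hT₁, hT₂, rfl⟩ := sub_split hT'
    rw [Multiset.le_singleton] at hT₁ hT₂
    rcases hT₁ with rfl | rfl <;> rcases hT₂ with rfl | rfl
    · left; rfl
    · exfalso
      rw [zero_add, Multiset.sum_singleton] at hTs
      exact h1 (neg_eq_zero.mp hTs)
    · exfalso
      rw [add_zero, Multiset.sum_singleton] at hTs
      exact h1 hTs
    · right
      rw [Multiset.singleton_add]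
      rfl

lemma zmultiples_neg (g : G) :
    AddSubgroup.zmultiples (-g) = AddSubgroup.zmultiples g := by
  ext x
  simp only [AddSubgroup.mem_zmultiples_iff]
  constructor
  · rintro ⟨k, rfl⟩; exact ⟨-k, by simp⟩
  · rintro ⟨k, rfl⟩; exact ⟨-k, by simp⟩

lemma atom_aug {g : G} {n : ℕ} (hord : addOrderOf g = n) {S : Multiset G}
    (hS : IsAtomRel (AddSubgroup.zmultiples g) S) {j : ℕ} (hj1 : 1 ≤ j) (hj2 : j < n)
    (hsum : S.sum = j • g) : IsMinZeroSum (S + Multiset.replicate j (-g)) := by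
  apply isMinZeroSum_of
  · intro h
    apply hS.1
    have := congrArg Multiset.card h
    rw [Multiset.card_add, Multiset.card_zero] at this
    exact Multiset.card_eq_zero.mp (by omega)
  · rw [Multiset.sum_add, Multiset.sum_replicate, hsum, neg_nsmul]
    abel
  · intro T hT hTs
    obtain ⟨T₁, T₂, h₁, h₂, rfl⟩ := sub_split hT
    obtain ⟨i, hij, rfl⟩ := le_replicate h₂
    rw [Multiset.sum_add, Multiset.sum_replicate, neg_nsmul, add_neg_eq_zero] at hTs
    have hmem : T₁.sum ∈ AddSubgroup.zmultiples g := by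
      rw [AddSubgroup.mem_zmultiples_iff]
      exact ⟨i, by rw [natCast_zsmul, hTs]⟩
    have hT₁cases : T₁ = 0 ∨ T₁ = S := by
      by_contra h
      push_neg at h
      exact hS.2.2 T₁ h₁ h.1 h.2 hmem
    rcases hT₁cases with rfl | rfl
    · left
      rw [Multiset.sum_zero] at hTs
      have hdvd : n ∣ i := hord ▸ addOrderOf_dvd_iff_nsmul_eq_zero.mpr hTs.symm
      simp [Nat.eq_zero_of_dvd_of_lt hdvd (lt_of_le_of_lt hij hj2)]
    · right
      have hji : (j - i) • g = 0 := by
        rw [sub_nsmul g hij, ← hsum, hTs]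
        abel
      have hdvd : n ∣ j - i := hord ▸ addOrderOf_dvd_iff_nsmul_eq_zero.mpr hji
      have : j - i = 0 := Nat.eq_zero_of_dvd_of_lt hdvd (by omega)
      have : i = j := by omega
      rw [this]

lemma nsmul_pair (g : G) (j : ℕ) :
    j • ({g, -g} : Multiset G) = Multiset.replicate j g + Multiset.replicate j (-g) := by
  induction j with
  | zero => simp
  | succ k ih =>
    rw [succ_nsmul, ih, Multiset.replicate_succ, Multiset.replicate_succ,
      ← Multiset.singleton_add, ← Multiset.singleton_add]
    have : ({g, -g} : Multiset G) = {g} + {-g} := by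
      rw [Multiset.singleton_add]; rfl
    rw [this]
    abel


lemma zmod_L1 {R : Type*} [CommRing R] {Y p δ a b c : R} (hp : p ≠ 0) (h2p : p + p ≠ 0)
    (hδ : δ = p ∨ δ = -p) (hb : b = a + δ) (hc : c = a + δ + δ)
    (ha' : a = Y ∨ a = Y + p) (hb' : b = Y ∨ b = Y + p) (hc' : c = Y ∨ c = Y + p) : False := by
  subst hb hc
  rcases hδ with rfl | rfl <;>
  rcases ha' with h | h <;> rcases hb' with h' | h' <;> rcases hc' with h'' | h'' <;>
    first
      | exact hp (by linear_combination h' - h)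
      | exact hp (by linear_combination h - h')
      | exact hp (by linear_combination h'' - h')
      | exact hp (by linear_combination h' - h'')
      | exact hp (by linear_combination h'' - h)
      | exact hp (by linear_combination h - h'')
      | exact h2p (by linear_combination h'' - h)
      | exact h2p (by linear_combination h - h'')
      | exact h2p (by linear_combination h' - h)
      | exact h2p (by linear_combination h - h')
      | exact h2p (by linear_combination h'' - h')
      | exact h2p (by linear_combination h' - h'')

lemma zmod_L2 {R : Type*} [CommRing R] {Y p δ a b c : R} (hp : p ≠ 0) (h2p : p + p ≠ 0)
    (hδ : δ = p ∨ δ = -p) (hb : b = a + δ) (hc : c = a - δ)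
    (ha' : a = Y ∨ a = Y + p) (hb' : b = Y ∨ b = Y + p) (hc' : c = Y ∨ c = Y + p) : False := by
  subst hb hc
  rcases hδ with rfl | rfl <;>
  rcases ha' with h | h <;> rcases hb' with h' | h' <;> rcases hc' with h'' | h'' <;>
    first
      | exact hp (by linear_combination h' - h)
      | exact hp (by linear_combination h - h')
      | exact hp (by linear_combination h'' - h')
      | exact hp (by linear_combination h' - h'')
      | exact hp (by linear_combination h'' - h)
      | exact hp (by linear_combination h - h'')
      | exact h2p (by linear_combination h'' - h)
      | exact h2p (by linear_combination h - h'')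
      | exact h2p (by linear_combination h' - h)
      | exact h2p (by linear_combination h - h')
      | exact h2p (by linear_combination h'' - h')
      | exact h2p (by linear_combination h' - h'')

end helpers

/-- **Proposition 3.8.** Let `G` be a finite abelian group, `g ∈ G` of order `n ≥ 5`, and
`B` a zero-sum sequence containing `g` and `-g` each with multiplicity at least `2n`.
Suppose `𝖫(B)` is an AAMP with difference `n-2` and period `{0, d, n-2}` for some
`d ∈ [1, n-3]` with `d ≠ (n-2)/2`. Then: (1) every subsequence `S` of `B` which is an atom
of `ℬ_{⟨g⟩}(G)` has `σ(S) ∈ {0, g, -g, (d+1)g, -(d+1)g}`; (2) if `S₁, S₂` are atoms of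
`ℬ_{⟨g⟩}(G)` with `S₁S₂ ∣ B`, then `σ(Sᵢ) ∈ {0, g, -g}` for at least one `i`. -/


theorem stmt_12 (G : Type*) [AddCommGroup G] [Finite G] (g : G) (n : ℕ)
    (hord : addOrderOf g = n) (hn : 5 ≤ n)
    (B : Multiset G) (hB : B.sum = 0)
    (hg : Multiset.replicate (2 * n) g ≤ B)
    (hg' : Multiset.replicate (2 * n) (-g) ≤ B)
    (d M : ℕ) (hd₁ : 1 ≤ d) (hd₂ : d ≤ n - 3) (hd₃ : 2 * d ≠ n - 2)
    (hL : IsAAMP (n - 2) ({0, d, n - 2} : Set ℕ) M (natSetToInt (lengthSet B))) :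
    (∀ S : Multiset G, S ≤ B → IsAtomRel (AddSubgroup.zmultiples g) S →
        S.sum ∈ ({0, g, -g, (d + 1) • g, -((d + 1) • g)} : Set G)) ∧
    (∀ S₁ S₂ : Multiset G, S₁ + S₂ ≤ B →
        IsAtomRel (AddSubgroup.zmultiples g) S₁ →
        IsAtomRel (AddSubgroup.zmultiples g) S₂ →
        S₁.sum ∈ ({0, g, -g} : Set G) ∨ S₂.sum ∈ ({0, g, -g} : Set G)) := by
  classical
  obtain ⟨m, rfl⟩ : ∃ m, n = m + 2 := ⟨n - 2, by omega⟩
  have hm3 : 3 ≤ m := by omega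
  have hdm : d < m := by omega
  haveI : NeZero m := ⟨by omega⟩
  have hnsg : (m + 2) • g = 0 := by rw [← hord]; exact addOrderOf_nsmul_eq_zero g
  have hg0 : g ≠ 0 := by
    intro h
    rw [h, addOrderOf_zero] at hord
    omega
  have hgg : g + g ≠ 0 := by
    intro h
    have h2 : addOrderOf g ∣ 2 := addOrderOf_dvd_iff_nsmul_eq_zero.mpr (by rw [two_nsmul]; exact h)
    rw [hord] at h2
    have := Nat.le_of_dvd (by norm_num) h2
    omega
  have hgneg : g ≠ -g := by
    intro h
    apply hgg
    nth_rewrite 2 [h]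
    simp
  have hδ0 : (d : ZMod m) ≠ 0 := by
    intro h
    have hdvd := (ZMod.natCast_eq_zero_iff d m).mp h
    have := Nat.le_of_dvd (by omega) hdvd
    omega
  have h2δ0 : (d : ZMod m) + (d : ZMod m) ≠ 0 := by
    intro h
    have h' : ((2 * d : ℕ) : ZMod m) = 0 := by push_cast; linear_combination h
    have hdvd := (ZMod.natCast_eq_zero_iff _ m).mp h'
    have := nat_dvd_lt2 (by omega) hdvd (by omega) (by omega)
    omega
  -- residues of lengths
  have hmm : m + 2 - 2 = m := by omega
  rw [hmm] at hL
  obtain ⟨Y, hY⟩ : ∃ Y : ZMod m, ∀ k ∈ lengthSet B,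
      (k : ZMod m) = Y ∨ (k : ZMod m) = Y + (d : ZMod m) := by
    obtain ⟨hpos, h0D, hdD, hDsub, y, L', Lstar, L'', b, hleast, hgreat, hLstar, hL's, hL''s,
      hmem, heq⟩ := hL
    refine ⟨((y : ℤ) : ZMod m), fun k hk => ?_⟩
    have hk' : ((k : ℕ) : ℤ) ∈ natSetToInt (lengthSet B) := ⟨k, hk, rfl⟩
    rw [heq] at hk'
    obtain ⟨x, hx, hxe⟩ := hk'
    have hx' : ∃ e ∈ ({0, d, m} : Set ℕ), ∃ q : ℤ, x = (e : ℤ) + q * m := by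
      rcases hx with (hx | hx) | hx
      · exact hmem x (Set.mem_union_left _ hx)
      · rw [hLstar] at hx
        exact hx.1
      · exact hmem x (Set.mem_union_right _ hx)
    obtain ⟨e, he, q, rfl⟩ := hx'
    have hcast : (k : ZMod m) = ((y : ℤ) : ZMod m) + ((e : ℕ) : ZMod m) := by
      have h2 := congrArg (fun z : ℤ => (z : ZMod m)) hxe
      simp only at h2
      push_cast at h2
      rw [← h2]
      simp [ZMod.natCast_self]
    rcases he with rfl | rfl | rfl
    · left
      simpa using hcast
    · right
      exact hcast
    · left
      rw [hcast, ZMod.natCast_self, add_zero]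
  -- conversion lemmas ZMod → ℕ
  have conv1 : ∀ j : ℕ, 1 ≤ j → j < m + 2 → (j : ZMod m) = ((1 : ℕ) : ZMod m) →
      j = 1 ∨ j = m + 1 := by
    intro j hj1 hjN hcast
    have hmod := (ZMod.natCast_eq_natCast_iff _ _ _).mp hcast
    have hdvd := (Nat.modEq_iff_dvd' hj1).mp hmod.symm
    rcases nat_dvd_le hdvd (by omega) with h | h <;> omega
  have conv2 : ∀ j : ℕ, 1 ≤ j → j < m + 2 → (j : ZMod m) = ((d + 1 : ℕ) : ZMod m) →
      j = d + 1 := by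
    intro j hj1 hjN hcast
    have hmod := (ZMod.natCast_eq_natCast_iff _ _ _).mp hcast
    rcases le_total j (d + 1) with h | h
    · have := Nat.eq_zero_of_dvd_of_lt ((Nat.modEq_iff_dvd' h).mp hmod) (by omega)
      omega
    · have := Nat.eq_zero_of_dvd_of_lt ((Nat.modEq_iff_dvd' h).mp hmod.symm) (by omega)
      omega
  have conv3 : ∀ j : ℕ, 1 ≤ j → j < m + 2 → ((j + d : ℕ) : ZMod m) = ((1 : ℕ) : ZMod m) →
      j = m + 1 - d := by
    intro j hj1 hjN hcast
    have hmod := (ZMod.natCast_eq_natCast_iff _ _ _).mp hcast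
    have hdvd := (Nat.modEq_iff_dvd' (by omega : 1 ≤ j + d)).mp hmod.symm
    have := nat_dvd_lt2 (by omega) hdvd (by omega) (by omega)
    omega
  have hKg : g ∈ AddSubgroup.zmultiples g := AddSubgroup.mem_zmultiples g
  have hKg' : -g ∈ AddSubgroup.zmultiples g := by
    rw [AddSubgroup.mem_zmultiples_iff]
    exact ⟨-1, by simp⟩
  have hsingle : ∀ S : Multiset G, IsAtomRel (AddSubgroup.zmultiples g) S →
      ∀ x ∈ S, x ∈ AddSubgroup.zmultiples g → S = {x} := by
    intro S hS x hx hxK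
    by_contra hne
    exact hS.2.2 {x} (Multiset.singleton_le.mpr hx) (by simp) (fun h => hne h.symm)
      (by rwa [Multiset.sum_singleton])
  have hcgB : 2 * (m + 2) ≤ Multiset.count g B := by
    have := Multiset.count_le_of_le g hg
    rwa [Multiset.count_replicate, if_pos rfl] at this
  have hcgB' : 2 * (m + 2) ≤ Multiset.count (-g) B := by
    have := Multiset.count_le_of_le (-g) hg'
    rwa [Multiset.count_replicate, if_pos rfl] at this
  have hU : IsMinZeroSum (Multiset.replicate (m + 2) g) := atom_replicate hord (by omega)
  have hV : IsMinZeroSum ({g, -g} : Multiset G) := atom_pair hg0 hgg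
  have mkW : ∀ (S : Multiset G) (j : ℕ), IsAtomRel (AddSubgroup.zmultiples g) S → 1 ≤ j →
      j < m + 2 → S.sum = j • g → IsMinZeroSum (S + Multiset.replicate (m + 2 - j) g) := by
    intro S j hS hj1 hjN hjg
    have hSneg : IsAtomRel (AddSubgroup.zmultiples (-g)) S := by
      rw [zmultiples_neg]
      exact hS
    have hWsum : S.sum = (m + 2 - j) • (-g) := by
      rw [hjg, neg_nsmul, eq_neg_iff_add_eq_zero, ← add_nsmul]
      have h2 : j + (m + 2 - j) = m + 2 := by omega
      rw [h2, hnsg]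
    have := atom_aug (by rw [addOrderOf_neg]; exact hord) hSneg
      (by omega : 1 ≤ m + 2 - j) (by omega : m + 2 - j < m + 2) hWsum
    simpa [neg_neg] using this
  have hreplsplit : ∀ j : ℕ, j < m + 2 → Multiset.replicate (m + 2) g =
      Multiset.replicate (m + 2 - j) g + Multiset.replicate j g := by
    intro j hj
    rw [← Multiset.replicate_add]
    congr 1
    omega
  -- key classification
  have key : ∀ S : Multiset G, S ≤ B → IsAtomRel (AddSubgroup.zmultiples g) S →
      S.sum ∈ ({0, g, -g, (d + 1) • g, -((d + 1) • g)} : Set G) := by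
    intro S hSB hS
    simp only [Set.mem_insert_iff, Set.mem_singleton_iff]
    obtain ⟨z, hz⟩ := AddSubgroup.mem_zmultiples_iff.mp hS.2.1
    obtain ⟨j, hjN, hjg⟩ : ∃ j : ℕ, j < m + 2 ∧ S.sum = j • g := by
      refine ⟨(z % (m + 2 : ℕ)).toNat, ?_, ?_⟩
      · have h1 : z % ((m + 2 : ℕ) : ℤ) < ((m + 2 : ℕ) : ℤ) :=
          Int.emod_lt_of_pos z (by exact_mod_cast (by omega : 0 < m + 2))
        have h1' : z % ((m + 2 : ℕ) : ℤ) < ((m + 2 : ℤ)) := by exact_mod_cast h1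
        have h0 : (0 : ℤ) ≤ z % ((m + 2 : ℕ) : ℤ) :=
          Int.emod_nonneg z (by exact_mod_cast (by omega : m + 2 ≠ 0))
        omega
      · have h0 : (0 : ℤ) ≤ z % ((m + 2 : ℕ) : ℤ) :=
          Int.emod_nonneg z (by exact_mod_cast (by omega : m + 2 ≠ 0))
        have h2 : (((z % ((m + 2 : ℕ) : ℤ)).toNat : ℤ)) = z % ((m + 2 : ℕ) : ℤ) :=
          Int.toNat_of_nonneg h0
        rw [← hz, ← natCast_zsmul, h2]
        conv_lhs => rw [← Int.emod_add_mul_ediv z ((m + 2 : ℕ) : ℤ)]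
        rw [add_zsmul, mul_comm ((m + 2 : ℕ) : ℤ), mul_zsmul, natCast_zsmul, hnsg,
          smul_zero, add_zero]
    by_cases hj0 : j = 0
    · left
      rw [hjg, hj0, zero_smul]
    by_cases hgS : g ∈ S
    · right; left
      rw [hsingle S hS g hgS hKg, Multiset.sum_singleton]
    by_cases hgS' : -g ∈ S
    · right; right; left
      rw [hsingle S hS (-g) hgS' hKg', Multiset.sum_singleton]
    have hcountg : Multiset.count g S = 0 := Multiset.count_eq_zero.mpr hgS
    have hcountg' : Multiset.count (-g) S = 0 := Multiset.count_eq_zero.mpr hgS'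
    have hj1 : 1 ≤ j := by omega
    have hXle : Multiset.replicate j (-g) + Multiset.replicate (m + 2) g ≤ B - S := by
      rw [Multiset.le_iff_count]
      intro a
      rw [Multiset.count_sub, Multiset.count_add, Multiset.count_replicate,
        Multiset.count_replicate]
      by_cases h1 : a = -g
      · subst h1
        rw [if_pos rfl, if_neg hgneg]
        have hSle := Multiset.count_le_of_le (-g) hSB
        omega
      by_cases h2 : a = g
      · subst h2
        rw [if_neg (fun h => hgneg h.symm), if_pos rfl]
        omega
      · rw [if_neg (fun h => h1 h.symm), if_neg (fun h => h2 h.symm)]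
        omega
    obtain ⟨D0, hXD⟩ : ∃ D0 : Multiset G, Multiset.replicate j (-g) +
        Multiset.replicate (m + 2) g + D0 = B - S :=
      ⟨_, by rw [add_comm]; exact tsub_add_cancel_of_le hXle⟩
    have hBdec : B = S + Multiset.replicate j (-g) + Multiset.replicate (m + 2) g + D0 := by
      have e1 : B = S + (B - S) := by
        rw [add_comm]
        exact (tsub_add_cancel_of_le hSB).symm
      rw [e1, ← hXD]
      abel
    have hD0sum : D0.sum = 0 := by
      have h3 := congrArg Multiset.sum hBdec
      rw [hB, Multiset.sum_add, Multiset.sum_add, Multiset.sum_add, Multiset.sum_replicate,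
        Multiset.sum_replicate, hjg, neg_nsmul, hnsg, add_zero] at h3
      rw [← neg_add_cancel (j • g)]
      linear_combination (norm := abel) h3.symm
    obtain ⟨fD, hfD, hfDsum⟩ := factor_exists D0 hD0sum
    have hW' : IsMinZeroSum (S + Multiset.replicate j (-g)) := atom_aug hord hS hj1 hjN hjg
    have hW : IsMinZeroSum (S + Multiset.replicate (m + 2 - j) g) := mkW S j hS hj1 hjN hjg
    have len1 : 2 + Multiset.card fD ∈ lengthSet B := by
      refine ⟨(S + Multiset.replicate j (-g)) ::ₘ Multiset.replicate (m + 2) g ::ₘ fD, ?_, ?_, ?_⟩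
      · rw [Multiset.card_cons, Multiset.card_cons]
        omega
      · intro A hA
        rcases Multiset.mem_cons.mp hA with rfl | hA
        · exact hW'
        rcases Multiset.mem_cons.mp hA with rfl | hA
        · exact hU
        · exact hfD A hA
      · rw [Multiset.sum_cons, Multiset.sum_cons, hfDsum]
        conv_rhs => rw [hBdec]
        abel
    have len2 : 1 + (j + Multiset.card fD) ∈ lengthSet B := by
      refine ⟨(S + Multiset.replicate (m + 2 - j) g) ::ₘ
        (Multiset.replicate j ({g, -g} : Multiset G) + fD), ?_, ?_, ?_⟩
      · rw [Multiset.card_cons, Multiset.card_add, Multiset.card_replicate]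
        omega
      · intro A hA
        rcases Multiset.mem_cons.mp hA with rfl | hA
        · exact hW
        rcases Multiset.mem_add.mp hA with hA | hA
        · rw [Multiset.eq_of_mem_replicate hA]
          exact hV
        · exact hfD A hA
      · rw [Multiset.sum_cons, Multiset.sum_add, Multiset.sum_replicate, nsmul_pair, hfDsum]
        conv_rhs => rw [hBdec, hreplsplit j hjN]
        abel
    have r1 := hY _ len1
    have r2 := hY _ len2
    push_cast at r1 r2
    have hjcases : (j : ZMod m) = ((1 : ℕ) : ZMod m) ∨ (j : ZMod m) = ((d + 1 : ℕ) : ZMod m) ∨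
        ((j + d : ℕ) : ZMod m) = ((1 : ℕ) : ZMod m) := by
      push_cast
      rcases r1 with h1 | h1 <;> rcases r2 with h2 | h2
      · left; linear_combination h2 - h1
      · right; left; linear_combination h2 - h1
      · right; right; linear_combination h2 - h1
      · left; linear_combination h2 - h1
    rcases hjcases with hc | hc | hc
    · rcases conv1 j hj1 hjN hc with rfl | rfl
      · right; left
        rw [hjg, one_nsmul]
      · right; right; left
        rw [hjg, eq_neg_iff_add_eq_zero, ← succ_nsmul, hnsg]
    · right; right; right; left
      rw [hjg, conv2 j hj1 hjN hc]
    · right; right; right; right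
      rw [hjg, conv3 j hj1 hjN hc, eq_neg_iff_add_eq_zero, ← add_nsmul]
      have h5 : (m + 1 - d) + (d + 1) = m + 2 := by omega
      rw [h5, hnsg]
  refine ⟨key, ?_⟩
  -- part 2
  intro S₁ S₂ hle h1 h2
  by_cases c1 : S₁.sum ∈ ({0, g, -g} : Set G)
  · exact Or.inl c1
  by_cases c2 : S₂.sum ∈ ({0, g, -g} : Set G)
  · exact Or.inr c2
  exfalso
  simp only [Set.mem_insert_iff, Set.mem_singleton_iff, not_or] at c1 c2
  have k1 := key S₁ (le_trans (Multiset.le_add_right _ _) hle) h1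
  have k2 := key S₂ (le_trans (Multiset.le_add_left _ _) hle) h2
  simp only [Set.mem_insert_iff, Set.mem_singleton_iff] at k1 k2
  have hcase1 : S₁.sum = (d + 1) • g ∨ S₁.sum = -((d + 1) • g) := by
    rcases k1 with h | h | h | h | h
    · exact absurd h c1.1
    · exact absurd h c1.2.1
    · exact absurd h c1.2.2
    · exact Or.inl h
    · exact Or.inr h
  have hcase2 : S₂.sum = (d + 1) • g ∨ S₂.sum = -((d + 1) • g) := by
    rcases k2 with h | h | h | h | h
    · exact absurd h c2.1
    · exact absurd h c2.2.1
    · exact absurd h c2.2.2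
    · exact Or.inl h
    · exact Or.inr h
  have getj : ∀ S : Multiset G, (S.sum = (d + 1) • g ∨ S.sum = -((d + 1) • g)) →
      ∃ j : ℕ, 1 ≤ j ∧ j < m + 2 ∧ S.sum = j • g ∧
        ((j : ZMod m) = 1 + (d : ZMod m) ∨ (j : ZMod m) = 1 - (d : ZMod m)) := by
    intro S hcase
    rcases hcase with h | h
    · refine ⟨d + 1, by omega, by omega, h, Or.inl ?_⟩
      push_cast
      ring
    · refine ⟨m + 1 - d, by omega, by omega, ?_, Or.inr ?_⟩
      · have h6 : (m + 1 - d) • g = -((d + 1) • g) := by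
          rw [eq_neg_iff_add_eq_zero, ← add_nsmul]
          have h5 : (m + 1 - d) + (d + 1) = m + 2 := by omega
          rw [h5, hnsg]
        rw [h, h6]
      · have h7 : ((m + 1 - d : ℕ) : ZMod m) = ((m + 1 : ℕ) : ZMod m) - ((d : ℕ) : ZMod m) := by
          rw [← Nat.cast_sub (by omega)]
        rw [h7]
        push_cast [ZMod.natCast_self]
        ring
  obtain ⟨j₁, hj₁1, hj₁N, hj₁g, he₁⟩ := getj S₁ hcase1
  obtain ⟨j₂, hj₂1, hj₂N, hj₂g, he₂⟩ := getj S₂ hcase2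
  have hg1 : g ∉ S₁ := fun h => c1.2.1 (by rw [hsingle S₁ h1 g h hKg, Multiset.sum_singleton])
  have hg2 : g ∉ S₂ := fun h => c2.2.1 (by rw [hsingle S₂ h2 g h hKg, Multiset.sum_singleton])
  have hg1' : -g ∉ S₁ := fun h => c1.2.2 (by rw [hsingle S₁ h1 (-g) h hKg', Multiset.sum_singleton])
  have hg2' : -g ∉ S₂ := fun h => c2.2.2 (by rw [hsingle S₂ h2 (-g) h hKg', Multiset.sum_singleton])
  have hcount1 : Multiset.count g (S₁ + S₂) = 0 := by
    rw [Multiset.count_add, Multiset.count_eq_zero.mpr hg1, Multiset.count_eq_zero.mpr hg2]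
  have hcount2 : Multiset.count (-g) (S₁ + S₂) = 0 := by
    rw [Multiset.count_add, Multiset.count_eq_zero.mpr hg1', Multiset.count_eq_zero.mpr hg2']
  have hXle : Multiset.replicate (j₁ + j₂) (-g) + Multiset.replicate (2 * (m + 2)) g ≤
      B - (S₁ + S₂) := by
    rw [Multiset.le_iff_count]
    intro a
    rw [Multiset.count_sub, Multiset.count_add, Multiset.count_replicate,
      Multiset.count_replicate]
    by_cases ha1 : a = -g
    · subst ha1
      rw [if_pos rfl, if_neg hgneg]
      have hSle := Multiset.count_le_of_le (-g) hle
      omega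
    by_cases ha2 : a = g
    · subst ha2
      rw [if_neg (fun h => hgneg h.symm), if_pos rfl]
      omega
    · rw [if_neg (fun h => ha1 h.symm), if_neg (fun h => ha2 h.symm)]
      omega
  obtain ⟨D0, hXD⟩ : ∃ D0 : Multiset G, Multiset.replicate (j₁ + j₂) (-g) +
      Multiset.replicate (2 * (m + 2)) g + D0 = B - (S₁ + S₂) :=
    ⟨_, by rw [add_comm]; exact tsub_add_cancel_of_le hXle⟩
  have hBdec : B = S₁ + S₂ + Multiset.replicate j₁ (-g) + Multiset.replicate j₂ (-g) +
      Multiset.replicate (m + 2) g + Multiset.replicate (m + 2) g + D0 := by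
    have e1 : B = S₁ + S₂ + (B - (S₁ + S₂)) := by
      rw [add_comm]
      exact (tsub_add_cancel_of_le hle).symm
    rw [Multiset.replicate_add, two_mul, Multiset.replicate_add] at hXD
    rw [e1, ← hXD]
    abel
  have hD0sum : D0.sum = 0 := by
    have h3 := congrArg Multiset.sum hBdec
    rw [hB] at h3
    simp only [Multiset.sum_add, Multiset.sum_replicate, neg_nsmul] at h3
    rw [hj₁g, hj₂g, hnsg] at h3
    rw [← neg_add_cancel (j₁ • g + j₂ • g)]
    linear_combination (norm := abel) h3.symm
  obtain ⟨fD, hfD, hfDsum⟩ := factor_exists D0 hD0sum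
  have hW₁' : IsMinZeroSum (S₁ + Multiset.replicate j₁ (-g)) := atom_aug hord h1 hj₁1 hj₁N hj₁g
  have hW₂' : IsMinZeroSum (S₂ + Multiset.replicate j₂ (-g)) := atom_aug hord h2 hj₂1 hj₂N hj₂g
  have hW₁ : IsMinZeroSum (S₁ + Multiset.replicate (m + 2 - j₁) g) := mkW S₁ j₁ h1 hj₁1 hj₁N hj₁g
  have hW₂ : IsMinZeroSum (S₂ + Multiset.replicate (m + 2 - j₂) g) := mkW S₂ j₂ h2 hj₂1 hj₂N hj₂g
  have len0 : 4 + Multiset.card fD ∈ lengthSet B := by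
    refine ⟨(S₁ + Multiset.replicate j₁ (-g)) ::ₘ (S₂ + Multiset.replicate j₂ (-g)) ::ₘ
      Multiset.replicate (m + 2) g ::ₘ Multiset.replicate (m + 2) g ::ₘ fD, ?_, ?_, ?_⟩
    · simp only [Multiset.card_cons]
      omega
    · intro A hA
      rcases Multiset.mem_cons.mp hA with rfl | hA
      · exact hW₁'
      rcases Multiset.mem_cons.mp hA with rfl | hA
      · exact hW₂'
      rcases Multiset.mem_cons.mp hA with rfl | hA
      · exact hU
      rcases Multiset.mem_cons.mp hA with rfl | hA
      · exact hU
      · exact hfD A hA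
    · simp only [Multiset.sum_cons]
      rw [hfDsum]
      conv_rhs => rw [hBdec]
      abel
  have len1 : 3 + (j₁ + Multiset.card fD) ∈ lengthSet B := by
    refine ⟨(S₁ + Multiset.replicate (m + 2 - j₁) g) ::ₘ (S₂ + Multiset.replicate j₂ (-g)) ::ₘ
      Multiset.replicate (m + 2) g ::ₘ (Multiset.replicate j₁ ({g, -g} : Multiset G) + fD),
      ?_, ?_, ?_⟩
    · simp only [Multiset.card_cons, Multiset.card_add, Multiset.card_replicate]
      omega
    · intro A hA
      rcases Multiset.mem_cons.mp hA with rfl | hA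
      · exact hW₁
      rcases Multiset.mem_cons.mp hA with rfl | hA
      · exact hW₂'
      rcases Multiset.mem_cons.mp hA with rfl | hA
      · exact hU
      rcases Multiset.mem_add.mp hA with hA | hA
      · rw [Multiset.eq_of_mem_replicate hA]
        exact hV
      · exact hfD A hA
    · simp only [Multiset.sum_cons, Multiset.sum_add, Multiset.sum_replicate]
      rw [nsmul_pair, hfDsum]
      conv_rhs => rw [hBdec]
      nth_rewrite 2 [hreplsplit j₁ hj₁N]
      abel
  have len2 : 3 + (j₂ + Multiset.card fD) ∈ lengthSet B := by
    refine ⟨(S₁ + Multiset.replicate j₁ (-g)) ::ₘ (S₂ + Multiset.replicate (m + 2 - j₂) g) ::ₘ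
      Multiset.replicate (m + 2) g ::ₘ (Multiset.replicate j₂ ({g, -g} : Multiset G) + fD),
      ?_, ?_, ?_⟩
    · simp only [Multiset.card_cons, Multiset.card_add, Multiset.card_replicate]
      omega
    · intro A hA
      rcases Multiset.mem_cons.mp hA with rfl | hA
      · exact hW₁'
      rcases Multiset.mem_cons.mp hA with rfl | hA
      · exact hW₂
      rcases Multiset.mem_cons.mp hA with rfl | hA
      · exact hU
      rcases Multiset.mem_add.mp hA with hA | hA
      · rw [Multiset.eq_of_mem_replicate hA]
        exact hV
      · exact hfD A hA
    · simp only [Multiset.sum_cons, Multiset.sum_add, Multiset.sum_replicate]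
      rw [nsmul_pair, hfDsum]
      conv_rhs => rw [hBdec]
      nth_rewrite 2 [hreplsplit j₂ hj₂N]
      abel
  have len3 : 2 + (j₁ + (j₂ + Multiset.card fD)) ∈ lengthSet B := by
    refine ⟨(S₁ + Multiset.replicate (m + 2 - j₁) g) ::ₘ
      (S₂ + Multiset.replicate (m + 2 - j₂) g) ::ₘ
      (Multiset.replicate j₁ ({g, -g} : Multiset G) +
        (Multiset.replicate j₂ ({g, -g} : Multiset G) + fD)), ?_, ?_, ?_⟩
    · simp only [Multiset.card_cons, Multiset.card_add, Multiset.card_replicate]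
      omega
    · intro A hA
      rcases Multiset.mem_cons.mp hA with rfl | hA
      · exact hW₁
      rcases Multiset.mem_cons.mp hA with rfl | hA
      · exact hW₂
      rcases Multiset.mem_add.mp hA with hA | hA
      · rw [Multiset.eq_of_mem_replicate hA]
        exact hV
      rcases Multiset.mem_add.mp hA with hA | hA
      · rw [Multiset.eq_of_mem_replicate hA]
        exact hV
      · exact hfD A hA
    · simp only [Multiset.sum_cons, Multiset.sum_add, Multiset.sum_replicate]
      rw [nsmul_pair, nsmul_pair, hfDsum]
      conv_rhs => rw [hBdec]
      nth_rewrite 1 [hreplsplit j₁ hj₁N]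
      nth_rewrite 1 [hreplsplit j₂ hj₂N]
      abel
  have r0 := hY _ len0
  have r1 := hY _ len1
  have r2 := hY _ len2
  have r3 := hY _ len3
  push_cast at r0 r1 r2 r3
  rcases he₁ with e1 | e1 <;> rcases he₂ with e2 | e2
  · refine zmod_L1 hδ0 h2δ0 (Or.inl rfl) ?_ ?_ r0 r1 r3
    · linear_combination e1
    · linear_combination e1 + e2
  · refine zmod_L2 hδ0 h2δ0 (Or.inl rfl) ?_ ?_ r0 r1 r2
    · linear_combination e1
    · linear_combination e2
  · refine zmod_L2 hδ0 h2δ0 (Or.inr rfl) ?_ ?_ r0 r1 r2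
    · linear_combination e1
    · linear_combination e2
  · refine zmod_L1 hδ0 h2δ0 (Or.inr rfl) ?_ ?_ r0 r1 r3
    · linear_combination e1
    · linear_combination e1 + e2
end

section
/- Let G be a cyclic group of order n ≥ 7 and g ∈ G with ord(g) = n. For k ∈ ℕ, let A_k be the zero-sum sequence consisting of g with multiplicity nk, −g with multiplicity nk, and 2g with multiplicity n, if n is even; and of g with multiplicity nk+2, −g with multiplicity nk, and 2g with multiplicity n−1, if n is odd. Then there is a bound M ∈ ℕ such that for all k ≥ n−1, the set 𝖫(A_k) is an AAP with difference 1 and bound M, but 𝖫(A_k) is not an arithmetical progression with difference 1. -/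
open Multiset

section Infra

variable {G : Type*} [AddCommGroup G] [DecidableEq G]

/-- replicate-triple representation -/
def Rm (g : G) (a b c : ℕ) : Multiset G :=
  replicate a g + replicate b (-g) + replicate c ((2:ℕ) • g)

variable {g : G} {n : ℕ}

structure Good (g : G) (n : ℕ) : Prop where
  hn : 7 ≤ n
  hord : addOrderOf g = n

namespace Good

variable (hg : Good g n)
include hg

omit [DecidableEq G] in
lemma n_pos : 0 < n := by have := hg.hn; omega

omit [DecidableEq G] in
lemma nsmul_eq_zero_iff {m : ℕ} : m • g = 0 ↔ n ∣ m := by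
  rw [← hg.hord]; exact (addOrderOf_dvd_iff_nsmul_eq_zero).symm

omit [DecidableEq G] in
lemma zsmul_eq_zero_iff {m : ℤ} : m • g = 0 ↔ (n:ℤ) ∣ m := by
  rw [← hg.hord]; exact (addOrderOf_dvd_iff_zsmul_eq_zero).symm

omit [DecidableEq G] in
lemma g_ne_zero : g ≠ 0 := by
  intro h
  have h1 : (1:ℕ) • g = 0 := by simp [h]
  have h2 := hg.nsmul_eq_zero_iff.mp h1
  have h3 := Nat.le_of_dvd one_pos h2
  have := hg.hn; omega

omit [DecidableEq G] in
lemma two_g_ne_zero : (2:ℕ) • g ≠ 0 := by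
  intro h
  have h2 := hg.nsmul_eq_zero_iff.mp h
  have h3 := Nat.le_of_dvd (by norm_num) h2
  have := hg.hn; omega

omit [DecidableEq G] in
lemma neg_g_ne_zero : -g ≠ 0 := by simpa using hg.g_ne_zero

omit [DecidableEq G] in
lemma g_ne_neg : g ≠ -g := by
  intro h
  have h1 : (2:ℕ) • g = 0 := by rw [two_nsmul]; nth_rewrite 2 [h]; simp
  exact hg.two_g_ne_zero h1

omit [DecidableEq G] in
lemma g_ne_two : g ≠ (2:ℕ) • g := by
  intro h
  rw [two_nsmul] at h
  have : g = 0 := by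
    have := (left_eq_add).mp h
    exact this
  exact hg.g_ne_zero this

omit [DecidableEq G] in
lemma neg_ne_two : -g ≠ (2:ℕ) • g := by
  intro h
  have h3 : (3:ℕ) • g = 0 := by
    have h1 : (2:ℕ) • g + g = 0 := by rw [← h]; simp
    rw [show (3:ℕ) = 2 + 1 by rfl, add_nsmul, one_nsmul]
    exact h1
  have h2 := hg.nsmul_eq_zero_iff.mp h3
  have h4 := Nat.le_of_dvd (by norm_num) h2
  have := hg.hn; omega

lemma count_Rm_g (a b c : ℕ) : (Rm g a b c).count g = a := by
  simp [Rm, count_replicate, Ne.symm hg.g_ne_neg, Ne.symm hg.g_ne_two]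

lemma count_Rm_neg (a b c : ℕ) : (Rm g a b c).count (-g) = b := by
  simp [Rm, count_replicate, hg.g_ne_neg, Ne.symm hg.neg_ne_two]

lemma count_Rm_two (a b c : ℕ) : (Rm g a b c).count ((2:ℕ) • g) = c := by
  simp [Rm, count_replicate, hg.g_ne_two, hg.neg_ne_two]

end Good

omit [DecidableEq G] in
lemma Rm_add (g : G) (a b c a' b' c' : ℕ) :
    Rm g a b c + Rm g a' b' c' = Rm g (a+a') (b+b') (c+c') := by
  simp only [Rm, replicate_add]
  abel

omit [DecidableEq G] in
lemma card_Rm (g : G) (a b c : ℕ) : Multiset.card (Rm g a b c) = a + b + c := by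
  simp [Rm]

omit [DecidableEq G] in
lemma Rm_eq_zero_iff (g : G) (a b c : ℕ) : Rm g a b c = 0 ↔ a = 0 ∧ b = 0 ∧ c = 0 := by
  constructor
  · intro h
    have h1 := congrArg Multiset.card h
    rw [card_Rm] at h1
    simp at h1
    omega
  · rintro ⟨rfl, rfl, rfl⟩; rfl

omit [DecidableEq G] in
lemma mem_Rm {g : G} {a b c : ℕ} {h : G} (hh : h ∈ Rm g a b c) :
    h = g ∨ h = -g ∨ h = (2:ℕ) • g := by
  simp only [Rm, mem_add, mem_replicate] at hh
  tauto

omit [DecidableEq G] in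
lemma sum_Rm (g : G) (a b c : ℕ) :
    (Rm g a b c).sum = ((a:ℤ) + 2*(c:ℤ) - (b:ℤ)) • g := by
  simp only [Rm, sum_add, sum_replicate]
  have h1 : a • g = (a:ℤ) • g := (natCast_zsmul g a).symm
  have h2 : b • (-g) = -((b:ℤ) • g) := by
    rw [natCast_zsmul]; exact (Nat.cast_smul_eq_nsmul ℤ b (-g)).symm ▸ by
      rw [← natCast_zsmul]; exact (zsmul_neg _ _)
  have h3 : c • ((2:ℕ) • g) = ((2*(c:ℤ))) • g := by
    rw [← mul_nsmul']
    rw [← natCast_zsmul]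
    push_cast
    ring_nf
  have h4 : ((a:ℤ) + 2*(c:ℤ) - (b:ℤ)) • g = (a:ℤ) • g + (2*(c:ℤ)) • g + -((b:ℤ) • g) := by
    first
      | rw [sub_zsmul, add_zsmul]
      | rw [sub_zsmul, add_zsmul, sub_eq_add_neg]
  rw [h1, h2, h3, h4]
  abel

/-- a multiset with elements among the triple is an `Rm`. -/
lemma eq_Rm_of_mem (hg : Good g n) {S : Multiset G}
    (hS : ∀ h ∈ S, h = g ∨ h = -g ∨ h = (2:ℕ) • g) :
    S = Rm g (S.count g) (S.count (-g)) (S.count ((2:ℕ) • g)) := by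
  ext h
  by_cases h1 : h = g
  · subst h1; rw [hg.count_Rm_g]
  by_cases h2 : h = -g
  · subst h2; rw [hg.count_Rm_neg]
  by_cases h3 : h = (2:ℕ) • g
  · subst h3; rw [hg.count_Rm_two]
  · rw [count_eq_zero_of_notMem, count_eq_zero_of_notMem]
    · intro hmem
      rcases mem_Rm hmem with h'|h'|h' <;> tauto
    · intro hmem
      rcases hS h hmem with h'|h'|h' <;> tauto

lemma le_Rm (hg : Good g n) {S : Multiset G} {a b c : ℕ} (hle : S ≤ Rm g a b c) :
    ∃ a' b' c', a' ≤ a ∧ b' ≤ b ∧ c' ≤ c ∧ S = Rm g a' b' c' := by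
  have hmem : ∀ h ∈ S, h = g ∨ h = -g ∨ h = (2:ℕ) • g := fun h hh =>
    mem_Rm (mem_of_le hle hh)
  refine ⟨S.count g, S.count (-g), S.count ((2:ℕ) • g), ?_, ?_, ?_, eq_Rm_of_mem hg hmem⟩
  · have := count_le_of_le g hle; rwa [hg.count_Rm_g] at this
  · have := count_le_of_le (-g) hle; rwa [hg.count_Rm_neg] at this
  · have := count_le_of_le ((2:ℕ) • g) hle; rwa [hg.count_Rm_two] at this

omit [DecidableEq G] in
lemma sum_Rm_eq_zero_iff (hg : Good g n) (a b c : ℕ) :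
    (Rm g a b c).sum = 0 ↔ (n:ℤ) ∣ ((a:ℤ) + 2*(c:ℤ) - (b:ℤ)) := by
  rw [sum_Rm, hg.zsmul_eq_zero_iff]

end Infra
section Atoms

open Multiset

variable {G : Type*} [AddCommGroup G] [DecidableEq G] {g : G} {n : ℕ}

lemma dvd_cases {N s : ℤ} (hN : 0 < N) (h : N ∣ s) (h0 : -N < s) (h1 : s < 2*N) :
    s = 0 ∨ s = N := by
  obtain ⟨m, rfl⟩ := h
  have hm : m = 0 ∨ m = 1 := by
    rcases lt_trichotomy m 0 with hl | hl | hl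
    · exfalso; nlinarith
    · left; exact hl
    · rcases lt_trichotomy m 1 with h2 | h2 | h2
      · omega
      · right; exact h2
      · exfalso; nlinarith
  rcases hm with rfl | rfl
  · left; ring
  · right; ring

lemma dvd_small {N s : ℤ} (hN : 0 < N) (h : N ∣ s) (h0 : -N < s) (h1 : s < N) : s = 0 := by
  rcases dvd_cases hN h h0 (by linarith) with h2 | h2
  · exact h2
  · omega

/-- abstract sufficient condition for being an atom -/
lemma isMin_of (hg : Good g n) (a b c : ℕ) (habc : ¬(a = 0 ∧ b = 0 ∧ c = 0))
    (hsum : (n:ℤ) ∣ ((a:ℤ) + 2*(c:ℤ) - (b:ℤ)))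
    (hmin : ∀ a' b' c' : ℕ, a' ≤ a → b' ≤ b → c' ≤ c →
      (n:ℤ) ∣ ((a':ℤ) + 2*(c':ℤ) - (b':ℤ)) →
      (a' = 0 ∧ b' = 0 ∧ c' = 0) ∨ (a' = a ∧ b' = b ∧ c' = c)) :
    IsMinZeroSum (Rm g a b c) := by
  refine ⟨fun h => habc ((Rm_eq_zero_iff g a b c).mp h), (sum_Rm_eq_zero_iff hg a b c).mpr hsum, ?_⟩
  rintro ⟨B, C, hB0, hC0, hBs, hCs, hadd⟩
  have hBle : B ≤ Rm g a b c := hadd ▸ le_add_right B C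
  obtain ⟨a', b', c', ha', hb', hc', rfl⟩ := le_Rm hg hBle
  have hdvd := (sum_Rm_eq_zero_iff hg a' b' c').mp hBs
  rcases hmin a' b' c' ha' hb' hc' hdvd with ⟨rfl, rfl, rfl⟩ | ⟨rfl, rfl, rfl⟩
  · exact hB0 ((Rm_eq_zero_iff g 0 0 0).mpr ⟨rfl, rfl, rfl⟩)
  · exact hC0 ((left_eq_add).mp hadd)

lemma isMin_pair_s13 (hg : Good g n) : IsMinZeroSum (Rm g 1 1 0) := by
  have hn7 : (7:ℤ) ≤ (n:ℤ) := by exact_mod_cast hg.hn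
  refine isMin_of hg 1 1 0 (by omega) ⟨0, by push_cast; ring⟩ ?_
  intro a' b' c' ha hb hc hdvd
  have haz : (a':ℤ) ≤ 1 := by exact_mod_cast ha
  have hbz : (b':ℤ) ≤ 1 := by exact_mod_cast hb
  have hcz : (c':ℤ) ≤ 0 := by exact_mod_cast hc
  have h0a : (0:ℤ) ≤ a' := Int.ofNat_nonneg a'
  have h0b : (0:ℤ) ≤ b' := Int.ofNat_nonneg b'
  have h0c : (0:ℤ) ≤ c' := Int.ofNat_nonneg c'
  have h0 : ((a':ℤ) + 2*(c':ℤ) - (b':ℤ)) = 0 :=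
    dvd_small (by linarith) hdvd (by linarith) (by linarith)
  have : a' + 2*c' = b' := by exact_mod_cast (by linarith : ((a':ℤ) + 2*(c':ℤ)) = b')
  omega

lemma isMin_V_s13 (hg : Good g n) : IsMinZeroSum (Rm g 0 2 1) := by
  have hn7 : (7:ℤ) ≤ (n:ℤ) := by exact_mod_cast hg.hn
  refine isMin_of hg 0 2 1 (by omega) ⟨0, by push_cast; ring⟩ ?_
  intro a' b' c' ha hb hc hdvd
  have haz : (a':ℤ) ≤ 0 := by exact_mod_cast ha
  have hbz : (b':ℤ) ≤ 2 := by exact_mod_cast hb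
  have hcz : (c':ℤ) ≤ 1 := by exact_mod_cast hc
  have h0a : (0:ℤ) ≤ a' := Int.ofNat_nonneg a'
  have h0b : (0:ℤ) ≤ b' := Int.ofNat_nonneg b'
  have h0c : (0:ℤ) ≤ c' := Int.ofNat_nonneg c'
  have h0 : ((a':ℤ) + 2*(c':ℤ) - (b':ℤ)) = 0 :=
    dvd_small (by linarith) hdvd (by linarith) (by linarith)
  have : a' + 2*c' = b' := by exact_mod_cast (by linarith : ((a':ℤ) + 2*(c':ℤ)) = b')
  omega

lemma isMin_X (hg : Good g n) : IsMinZeroSum (Rm g 0 n 0) := by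
  have hn7 : (7:ℤ) ≤ (n:ℤ) := by exact_mod_cast hg.hn
  refine isMin_of hg 0 n 0 (by have := hg.hn; omega) ⟨-1, by push_cast; ring⟩ ?_
  intro a' b' c' ha hb hc hdvd
  have haz : (a':ℤ) ≤ 0 := by exact_mod_cast ha
  have hbz : (b':ℤ) ≤ n := by exact_mod_cast hb
  have hcz : (c':ℤ) ≤ 0 := by exact_mod_cast hc
  have h0b : (0:ℤ) ≤ b' := Int.ofNat_nonneg b'
  have ha0 : a' = 0 := by omega
  have hc0 : c' = 0 := by omega
  subst ha0; subst hc0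
  have h2 : (n:ℤ) ∣ (b':ℤ) := by
    have h3 : ((0:ℕ):ℤ) + 2*((0:ℕ):ℤ) - (b':ℤ) = -(b':ℤ) := by push_cast; ring
    rw [h3] at hdvd
    exact (Int.dvd_neg).mp hdvd
  rcases dvd_cases (by linarith : (0:ℤ) < n) h2 (by linarith) (by linarith) with h|h
  · left
    refine ⟨rfl, ?_, rfl⟩
    exact_mod_cast h
  · right
    refine ⟨rfl, ?_, rfl⟩
    exact_mod_cast h

lemma isMin_W (hg : Good g n) (a c : ℕ) (hac : a + 2*c = n) : IsMinZeroSum (Rm g a 0 c) := by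
  have hn7 : (7:ℤ) ≤ (n:ℤ) := by exact_mod_cast hg.hn
  have hacz : (a:ℤ) + 2*(c:ℤ) = (n:ℤ) := by exact_mod_cast hac
  refine isMin_of hg a 0 c (by omega) ⟨1, by push_cast; linarith⟩ ?_
  intro a' b' c' ha hb hc' hdvd
  have haz : (a':ℤ) ≤ a := by exact_mod_cast ha
  have hbz : (b':ℤ) ≤ 0 := by exact_mod_cast hb
  have hcz : (c':ℤ) ≤ c := by exact_mod_cast hc'
  have h0a : (0:ℤ) ≤ a' := Int.ofNat_nonneg a'
  have h0b : (0:ℤ) ≤ b' := Int.ofNat_nonneg b'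
  have h0c : (0:ℤ) ≤ c' := Int.ofNat_nonneg c'
  rcases dvd_cases (by linarith : (0:ℤ) < n) hdvd (by linarith) (by linarith) with h|h
  · left
    have : a' + 2*c' + b' = 0 := by
      exact_mod_cast (by linarith : ((a':ℤ) + 2*(c':ℤ) + b') = 0)
    omega
  · right
    have he1 : (a':ℤ) = a ∧ (c':ℤ) = c ∧ (b':ℤ) = 0 := by
      refine ⟨by linarith, by linarith, by linarith⟩
    refine ⟨by exact_mod_cast he1.1, by exact_mod_cast he1.2.2, by exact_mod_cast he1.2.1⟩

lemma isMin_Y (hg : Good g n) (c : ℕ) (hc : 2*c = n + 1) : IsMinZeroSum (Rm g 0 1 c) := by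
  have hn7 : (7:ℤ) ≤ (n:ℤ) := by exact_mod_cast hg.hn
  have hcz : (2:ℤ)*(c:ℤ) = (n:ℤ) + 1 := by exact_mod_cast hc
  refine isMin_of hg 0 1 c (by omega) ⟨1, by push_cast; linarith⟩ ?_
  intro a' b' c' ha hb hc' hdvd
  have haz : (a':ℤ) ≤ 0 := by exact_mod_cast ha
  have hbz : (b':ℤ) ≤ 1 := by exact_mod_cast hb
  have hc'z : (c':ℤ) ≤ c := by exact_mod_cast hc'
  have h0a : (0:ℤ) ≤ a' := Int.ofNat_nonneg a'
  have h0b : (0:ℤ) ≤ b' := Int.ofNat_nonneg b'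
  have h0c : (0:ℤ) ≤ c' := Int.ofNat_nonneg c'
  rcases dvd_cases (by linarith : (0:ℤ) < n) hdvd (by linarith) (by linarith) with h|h
  · left
    have : a' + 2*c' = b' := by exact_mod_cast (by linarith : ((a':ℤ) + 2*(c':ℤ)) = b')
    omega
  · right
    have hb1 : (b':ℤ) = 1 := by
      rcases Nat.le_one_iff_eq_zero_or_eq_one.mp hb with rfl | rfl
      · exfalso
        have h2 : (2:ℤ)*c' = n := by push_cast at h; linarith
        have h3 : (2:ℤ)*c' ≤ 2*c := by linarith
        have h4 : (2:ℤ)*c' = n ∧ (2:ℤ)*c = n+1 := ⟨h2, hcz⟩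
        -- 2c' = n, 2c = n+1 → c' ≤ c → 2c' ≤ n+1 fine; contradiction via parity in ℕ
        have h5 : 2*c' = n := by exact_mod_cast h2
        omega
      · norm_num
    have hc1 : (c':ℤ) = c := by linarith
    refine ⟨by omega, by exact_mod_cast hb1, by exact_mod_cast hc1⟩

end Atoms
section Classify

open Multiset

variable {G : Type*} [AddCommGroup G] [DecidableEq G] {g : G} {n : ℕ}

lemma min_no_sub (hg : Good g n) {a b c : ℕ} (hmin : IsMinZeroSum (Rm g a b c))
    {a' b' c' : ℕ} (ha : a' ≤ a) (hb : b' ≤ b) (hc : c' ≤ c)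
    (h0 : ¬(a' = 0 ∧ b' = 0 ∧ c' = 0)) (hw : ¬(a' = a ∧ b' = b ∧ c' = c))
    (hd : (n:ℤ) ∣ ((a':ℤ) + 2*(c':ℤ) - (b':ℤ))) : False := by
  apply hmin.2.2
  refine ⟨Rm g a' b' c', Rm g (a-a') (b-b') (c-c'), ?_, ?_, ?_, ?_, ?_⟩
  · rw [Ne, Rm_eq_zero_iff]; exact h0
  · rw [Ne, Rm_eq_zero_iff]; intro h; exact hw ⟨by omega, by omega, by omega⟩
  · exact (sum_Rm_eq_zero_iff hg a' b' c').mpr hd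
  · have hadd : Rm g a' b' c' + Rm g (a-a') (b-b') (c-c') = Rm g a b c := by
      rw [Rm_add]
      congr 1 <;> omega
    have h1 := hmin.2.1
    rw [← hadd, sum_add, (sum_Rm_eq_zero_iff hg a' b' c').mpr hd, zero_add] at h1
    exact h1
  · rw [Rm_add]
    congr 1 <;> omega

lemma classify (hg : Good g n) {a b c : ℕ} (hcn : c ≤ n) (hcodd : Odd n → c < n)
    (hmin : IsMinZeroSum (Rm g a b c)) :
    (a = 1 ∧ b = 1 ∧ c = 0) ∨ (a = 0 ∧ b = 2 ∧ c = 1) ∨ (a = 0 ∧ b = n ∧ c = 0) ∨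
      (b = 0 ∧ a + 2*c = n) ∨ (a = 0 ∧ b = 1 ∧ 2*c = n + 1) := by
  have hn7 : 7 ≤ n := hg.hn
  have hn7z : (7:ℤ) ≤ (n:ℤ) := by exact_mod_cast hn7
  have hne : ¬(a = 0 ∧ b = 0 ∧ c = 0) := fun h => hmin.1 ((Rm_eq_zero_iff g a b c).mpr h)
  have hdvd : (n:ℤ) ∣ ((a:ℤ) + 2*(c:ℤ) - (b:ℤ)) := (sum_Rm_eq_zero_iff hg a b c).mp hmin.2.1
  -- case: both a and b positive
  by_cases hab : 1 ≤ a ∧ 1 ≤ b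
  · by_cases hp : a = 1 ∧ b = 1 ∧ c = 0
    · exact Or.inl hp
    · exfalso
      exact min_no_sub hg hmin hab.1 hab.2 (Nat.zero_le c) (by omega)
        (fun h => hp ⟨h.1.symm, h.2.1.symm, h.2.2.symm⟩) ⟨0, by push_cast; ring⟩
  by_cases hb0 : b = 0
  · -- b = 0 case
    subst hb0
    right; right; right
    have hdvd' : (n:ℤ) ∣ ((a:ℤ) + 2*(c:ℤ)) := by
      have : ((a:ℤ) + 2*(c:ℤ) - ((0:ℕ):ℤ)) = (a:ℤ) + 2*(c:ℤ) := by push_cast; ring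
      rwa [this] at hdvd
    have hsdvd : n ∣ a + 2*c := by exact_mod_cast hdvd'
    have hspos : a + 2*c ≠ 0 := by omega
    have hsn : n ≤ a + 2*c := Nat.le_of_dvd (by omega) hsdvd
    rcases lt_or_ge n (a + 2*c) with hgt | hle
    · exfalso
      -- a + 2c > n : find proper subsum n
      rcases le_or_gt (2*c) n with h2c | h2c
      · -- c small: use (n - 2c, c)
        refine min_no_sub hg hmin (a' := n - 2*c) (b' := 0) (c' := c)
          (by omega) le_rfl le_rfl (by omega) (by omega) ?_
        refine ⟨1, ?_⟩
        have : ((n - 2*c : ℕ):ℤ) = (n:ℤ) - 2*c := by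
          push_cast [Nat.cast_sub h2c]; ring
        rw [this]; push_cast; ring
      · rcases Nat.even_or_odd n with hev | hod
        · -- even: use (0, n/2)
          obtain ⟨t, ht⟩ := hev
          refine min_no_sub hg hmin (a' := 0) (b' := 0) (c' := n/2)
            (Nat.zero_le a) le_rfl (by omega) (by omega) (by omega) ?_
          refine ⟨1, ?_⟩
          have h2 : 2*(n/2) = n := by omega
          have : (2:ℤ)*((n/2 : ℕ):ℤ) = (n:ℤ) := by exact_mod_cast h2
          push_cast
          linarith
        · -- odd
          rcases Nat.eq_zero_or_pos a with ha0 | ha1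
          · -- a = 0, odd n: n ∣ 2c → n ∣ c → c ≥ n, contra c < n
            subst ha0
            have hcop : Nat.Coprime n 2 := by
              have h2 : ¬ 2 ∣ n := by
                obtain ⟨t, ht⟩ := hod; omega
              exact Nat.coprime_comm.mp ((Nat.Prime.coprime_iff_not_dvd Nat.prime_two).mpr h2)
            have hdc : n ∣ c := by
              have : n ∣ 2*c := by simpa using hsdvd
              exact (Nat.Coprime.dvd_of_dvd_mul_left hcop this)
            have := hcodd hod
            have hc0 : c ≠ 0 := by omega
            have := Nat.le_of_dvd (by omega) hdc
            omega
          · -- a ≥ 1: use (1, (n-1)/2)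
            refine min_no_sub hg hmin (a' := 1) (b' := 0) (c' := (n-1)/2)
              ha1 le_rfl (by omega) (by omega) (by omega) ?_
            refine ⟨1, ?_⟩
            have h2 : 1 + 2*((n-1)/2) = n := by
              obtain ⟨t, ht⟩ := hod; omega
            have : ((1:ℕ):ℤ) + 2*(((n-1)/2 : ℕ):ℤ) = (n:ℤ) := by exact_mod_cast h2
            push_cast at this ⊢
            linarith
    · exact Or.inl ⟨rfl, by omega⟩
  · -- a = 0, b ≥ 1
    have ha0 : a = 0 := by omega
    subst ha0
    have hb1 : 1 ≤ b := by omega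
    rcases Nat.eq_zero_or_pos c with hc0 | hc1
    · -- c = 0 : X
      subst hc0
      right; right; left
      have hdvd' : (n:ℤ) ∣ (b:ℤ) := by
        have h1 : (((0:ℕ)):ℤ) + 2*(((0:ℕ)):ℤ) - (b:ℤ) = -(b:ℤ) := by push_cast; ring
        rw [h1] at hdvd
        exact (Int.dvd_neg).mp hdvd
      have hbd : n ∣ b := by exact_mod_cast hdvd'
      have hbn : n ≤ b := Nat.le_of_dvd (by omega) hbd
      rcases lt_or_ge n b with hgt | hle
      · exfalso
        refine min_no_sub hg hmin (a' := 0) (b' := n) (c' := 0)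
          le_rfl (by omega) le_rfl (by omega) (by omega) ?_
        refine ⟨-1, by push_cast; ring⟩
      · exact ⟨rfl, by omega, rfl⟩
    · rcases lt_or_ge 1 b with hb2 | hble
      · -- b ≥ 2, c ≥ 1: V
        by_cases hV : b = 2 ∧ c = 1
        · exact Or.inr (Or.inl ⟨rfl, hV.1, hV.2⟩)
        · exfalso
          refine min_no_sub hg hmin (a' := 0) (b' := 2) (c' := 1)
            le_rfl (by omega) (by omega) (by omega) (by omega) ?_
          exact ⟨0, by push_cast; ring⟩
      · -- b = 1
        have hb1' : b = 1 := by omega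
        subst hb1'
        right; right; right; right
        have hs : (n:ℤ) ∣ (2*(c:ℤ) - 1) := by
          have h1 : (((0:ℕ)):ℤ) + 2*((c:ℕ):ℤ) - ((1:ℕ):ℤ) = 2*(c:ℤ) - 1 := by push_cast; ring
          rwa [h1] at hdvd
        have hcz : (c:ℤ) ≤ n := by exact_mod_cast hcn
        have hc1z : (1:ℤ) ≤ (c:ℤ) := by exact_mod_cast hc1
        rcases dvd_cases (by linarith : (0:ℤ) < n) hs (by linarith) (by linarith) with h|h
        · exfalso
          have : 2*c = 1 := by exact_mod_cast (by linarith : (2:ℤ)*(c:ℤ) = 1)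
          omega
        · have : 2*c = n + 1 := by exact_mod_cast (by linarith : (2:ℤ)*(c:ℤ) = (n:ℤ) + 1)
          exact ⟨rfl, rfl, this⟩

end Classify
section Stats

open Multiset

variable {G : Type*} [AddCommGroup G] [DecidableEq G] {g : G} {n : ℕ}

lemma count_in_sum (a : G) (f : Multiset (Multiset G)) :
    (f.sum).count a = (f.map (fun B => B.count a)).sum := by
  induction f using Multiset.induction_on with
  | empty => simp
  | cons B t ih => simp [ih]

lemma stats (hg : Good g n) (f : Multiset (Multiset G))
    (hf : ∀ B ∈ f, ∃ a b c : ℕ, B = Rm g a b c ∧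
      ((a = 1 ∧ b = 1 ∧ c = 0) ∨ (a = 0 ∧ b = 2 ∧ c = 1) ∨ (a = 0 ∧ b = n ∧ c = 0) ∨
        (b = 0 ∧ a + 2*c = n) ∨ (a = 0 ∧ b = 1 ∧ 2*c = n + 1))) :
    ∃ p v x y W T2 : ℤ, 0 ≤ p ∧ 0 ≤ v ∧ 0 ≤ x ∧ 0 ≤ y ∧ 0 ≤ W ∧ 0 ≤ T2 ∧
      (Even n → y = 0) ∧
      (((f.map (fun B => B.count g)).sum : ℤ) + 2*T2 = p + (n:ℤ)*W) ∧
      (((f.map (fun B => B.count (-g))).sum : ℤ) = p + 2*v + (n:ℤ)*x + y) ∧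
      (2*((f.map (fun B => B.count ((2:ℕ) • g))).sum : ℤ) = 2*v + 2*T2 + y*((n:ℤ)+1)) ∧
      ((Multiset.card f : ℤ) = p+v+x+y+W) ∧
      (2*(Multiset.card f : ℤ) ≤ ((f.map (fun B => B.count g)).sum : ℤ) +
        ((f.map (fun B => B.count (-g))).sum : ℤ) +
        ((f.map (fun B => B.count ((2:ℕ) • g))).sum : ℤ)) ∧
      (((f.map (fun B => B.count g)).sum : ℤ) + ((f.map (fun B => B.count (-g))).sum : ℤ) +
        ((f.map (fun B => B.count ((2:ℕ) • g))).sum : ℤ) ≤ (n:ℤ)*(Multiset.card f)) := by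
  have hn7 : 7 ≤ n := hg.hn
  have hn7z : (7:ℤ) ≤ (n:ℤ) := by exact_mod_cast hn7
  induction f using Multiset.induction_on with
  | empty =>
    exact ⟨0,0,0,0,0,0, le_rfl, le_rfl, le_rfl, le_rfl, le_rfl, le_rfl, fun _ => rfl,
      by simp, by simp, by simp, by simp, by simp, by simp⟩
  | cons B t ih =>
    obtain ⟨p, v, x, y, W, T2, hp, hv, hx, hy, hW, hT2, hyev, e1, e2, e3, e4, e5, e6⟩ :=
      ih (fun B' hB' => hf B' (mem_cons_of_mem hB'))
    obtain ⟨a, b, c, rfl, hcase⟩ := hf B (mem_cons_self B t)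
    simp only [map_cons, sum_cons, card_cons]
    rw [hg.count_Rm_g, hg.count_Rm_neg, hg.count_Rm_two]
    push_cast
    have hrW : (n:ℤ)*(W+1) = (n:ℤ)*W + n := by ring
    have hrx : (n:ℤ)*(x+1) = (n:ℤ)*x + n := by ring
    have hry : (y+1)*((n:ℤ)+1) = y*((n:ℤ)+1) + (n+1) := by ring
    have hrc : (n:ℤ)*((Multiset.card t : ℤ)+1) = (n:ℤ)*(Multiset.card t) + n := by ring
    rcases hcase with ⟨rfl, rfl, rfl⟩ | ⟨rfl, rfl, rfl⟩ | ⟨rfl, rfl, rfl⟩ | ⟨hb0, hac⟩ |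
      ⟨rfl, rfl, h2c⟩
    · -- pair
      exact ⟨p+1, v, x, y, W, T2, by linarith, hv, hx, hy, hW, hT2, hyev,
        by push_cast; linarith, by push_cast; linarith, by push_cast; linarith,
        by push_cast; linarith, by push_cast; linarith, by push_cast; linarith⟩
    · -- V
      exact ⟨p, v+1, x, y, W, T2, hp, by linarith, hx, hy, hW, hT2, hyev,
        by push_cast; linarith, by push_cast; linarith, by push_cast; linarith,
        by push_cast; linarith, by push_cast; linarith, by push_cast; linarith⟩
    · -- X
      exact ⟨p, v, x+1, y, W, T2, hp, hv, by linarith, hy, hW, hT2, hyev,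
        by push_cast; linarith, by push_cast; linarith, by push_cast; linarith,
        by push_cast; linarith, by push_cast; linarith, by push_cast; linarith⟩
    · -- W-atom
      subst hb0
      have hacz : (a:ℤ) + 2*(c:ℤ) = (n:ℤ) := by exact_mod_cast hac
      have hc' : (c:ℤ) ≥ 0 := Int.ofNat_nonneg c
      have ha' : (a:ℤ) ≥ 0 := Int.ofNat_nonneg a
      have hcard : 2 ≤ (a:ℤ) + (c:ℤ) := by linarith
      have hcard2 : (a:ℤ) + (c:ℤ) ≤ (n:ℤ) := by linarith
      exact ⟨p, v, x, y, W+1, T2+c, hp, hv, hx, hy, by linarith, by linarith, hyev,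
        by push_cast; linarith, by push_cast; linarith, by push_cast; linarith,
        by push_cast; linarith, by push_cast; linarith, by push_cast; linarith⟩
    · -- Y
      have h2cz : 2*(c:ℤ) = (n:ℤ) + 1 := by exact_mod_cast h2c
      have hyev' : Even n → y + 1 = 0 := by
        intro hev; exfalso; obtain ⟨t', ht'⟩ := hev; omega
      exact ⟨p, v, x, y+1, W, T2, hp, hv, hx, by linarith, hW, hT2, hyev',
        by push_cast; linarith, by push_cast; linarith, by push_cast; linarith,
        by push_cast; linarith, by push_cast; linarith, by push_cast; linarith⟩

lemma arith_even (k p v x y W T2 : ℤ) (hn7z : (7:ℤ) ≤ (n:ℤ))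
    (hp : 0 ≤ p) (hv : 0 ≤ v) (hx : 0 ≤ x) (hy0 : y = 0) (hW : 0 ≤ W) (hT2 : 0 ≤ T2)
    (e1 : (n:ℤ)*k + 2*T2 = p + (n:ℤ)*W) (e2 : (n:ℤ)*k = p + 2*v + (n:ℤ)*x + y)
    (e3 : 2*(n:ℤ) = 2*v + 2*T2 + y*((n:ℤ)+1)) (e4 : p+v+x+y+W = 2*k+3) : False := by
  subst hy0
  have hnW : (n:ℤ)*W = (n:ℤ)*x + 2*(n:ℤ) := by linarith
  have hWx : W = x + 2 := by
    have h : (n:ℤ)*(W - x - 2) = 0 := by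
      have : (n:ℤ)*(W - x - 2) = (n:ℤ)*W - (n:ℤ)*x - 2*(n:ℤ) := by ring
      linarith [this]
    rcases mul_eq_zero.mp h with h'|h'
    · exfalso; linarith
    · linarith
  have hexp : ((n:ℤ)-2)*(k-x) = (n:ℤ)*k - (n:ℤ)*x - 2*k + 2*x := by ring
  have hv' : v = ((n:ℤ)-2)*(k-x) - 1 := by rw [hexp]; linarith
  have hd1 : 1 ≤ k - x := by
    by_contra hcon
    push_neg at hcon
    have : ((n:ℤ)-2)*(k-x) ≤ 0 :=
      mul_nonpos_of_nonneg_of_nonpos (by linarith) (by linarith)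
    linarith
  have hexp2 : ((n:ℤ)-4)*(k-x) = (n:ℤ)*k - (n:ℤ)*x - 4*k + 4*x := by ring
  have hp' : ((n:ℤ)-4)*(k-x) ≤ 2 := by rw [hexp2]; linarith
  have : ((n:ℤ)-4)*1 ≤ ((n:ℤ)-4)*(k-x) :=
    mul_le_mul_of_nonneg_left hd1 (by linarith)
  linarith

lemma arith_odd (k p v x y W T2 : ℤ) (hn7z : (7:ℤ) ≤ (n:ℤ))
    (hp : 0 ≤ p) (hv : 0 ≤ v) (hx : 0 ≤ x) (hy : 0 ≤ y) (hW : 0 ≤ W) (hT2 : 0 ≤ T2)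
    (e1 : (n:ℤ)*k + 2 + 2*T2 = p + (n:ℤ)*W) (e2 : (n:ℤ)*k = p + 2*v + (n:ℤ)*x + y)
    (e3 : 2*((n:ℤ)-1) = 2*v + 2*T2 + y*((n:ℤ)+1)) (e4 : p+v+x+y+W = 2*k+3) : False := by
  have hyn : y*((n:ℤ)+1) = y*(n:ℤ) + y := by ring
  have hnW : (n:ℤ)*W = (n:ℤ)*x + 2*(n:ℤ) - (n:ℤ)*y := by linarith
  have hWx : W = x + 2 - y := by
    have h : (n:ℤ)*(W - x - 2 + y) = 0 := by
      have : (n:ℤ)*(W - x - 2 + y) = (n:ℤ)*W - (n:ℤ)*x - 2*(n:ℤ) + (n:ℤ)*y := by ring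
      linarith [this]
    rcases mul_eq_zero.mp h with h'|h'
    · exfalso; linarith
    · linarith
  have hexp : ((n:ℤ)-2)*(k-x) = (n:ℤ)*k - (n:ℤ)*x - 2*k + 2*x := by ring
  have hvy : v + y = ((n:ℤ)-2)*(k-x) - 1 := by rw [hexp]; linarith
  have hd1 : 1 ≤ k - x := by
    by_contra hcon
    push_neg at hcon
    have : ((n:ℤ)-2)*(k-x) ≤ 0 :=
      mul_nonpos_of_nonneg_of_nonpos (by linarith) (by linarith)
    linarith
  have hexp2 : ((n:ℤ)-4)*(k-x) = (n:ℤ)*k - (n:ℤ)*x - 4*k + 4*x := by ring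
  have hp' : ((n:ℤ)-4)*(k-x) ≤ 2 + y := by rw [hexp2]; linarith
  have hmul : ((n:ℤ)-4)*1 ≤ ((n:ℤ)-4)*(k-x) :=
    mul_le_mul_of_nonneg_left hd1 (by linarith)
  have hy1 : 1 ≤ y := by linarith
  -- 2v + y(n+1) ≤ 2n - 2 and v = (n-2)(k-x) - 1 - y
  have hv2 : 2*v = 2*((n:ℤ)-2)*(k-x) - 2 - 2*y := by linarith
  have hT2' : 2*v + y*((n:ℤ)+1) ≤ 2*(n:ℤ) - 2 := by linarith
  have hfin : 2*((n:ℤ)-2)*(k-x) + y*((n:ℤ)-1) ≤ 2*(n:ℤ) := by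
    have : y*((n:ℤ)+1) = y*((n:ℤ)-1) + 2*y := by ring
    linarith
  have hmul2 : ((n:ℤ)-1)*1 ≤ ((n:ℤ)-1)*y := mul_le_mul_of_nonneg_left hy1 (by linarith)
  have hmul3 : (2*((n:ℤ)-2))*1 ≤ (2*((n:ℤ)-2))*(k-x) :=
    mul_le_mul_of_nonneg_left hd1 (by linarith)
  have hcomm : y*((n:ℤ)-1) = ((n:ℤ)-1)*y := by ring
  have hcomm2 : 2*((n:ℤ)-2)*(k-x) = (2*((n:ℤ)-2))*(k-x) := by ring
  linarith [hfin, hmul2, hmul3]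

end Stats
section Facts

open Multiset

variable {G : Type*} [AddCommGroup G] [DecidableEq G] {g : G} {n : ℕ}

lemma sum_map_cast {G : Type*} (f : Multiset (Multiset G)) (F : Multiset G → ℕ) :
    (f.map fun B => ((F B : ℕ) : ℤ)).sum = (((f.map F).sum : ℕ) : ℤ) := by
  induction f using Multiset.induction_on with
  | empty => simp
  | cons B t ih =>
    rw [Multiset.map_cons, Multiset.sum_cons, Multiset.map_cons, Multiset.sum_cons, ih]
    push_cast
    ring

lemma length_facts_even (hg : Good g n) (hev : Even n) (k : ℕ) {l : ℕ}
    (hl : l ∈ lengthSet (Rm g (n*k) (n*k) n)) :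
    2*l ≤ 2*(n*k) + n ∧ 2*(n*k) + n ≤ n*l ∧ l ≠ 2*k+3 := by
  have hn7 : 7 ≤ n := hg.hn
  have hn7z : (7:ℤ) ≤ (n:ℤ) := by exact_mod_cast hn7
  obtain ⟨f, hcard, hmins, hsum⟩ := hl
  have hf : ∀ B ∈ f, ∃ a b c : ℕ, B = Rm g a b c ∧
      ((a = 1 ∧ b = 1 ∧ c = 0) ∨ (a = 0 ∧ b = 2 ∧ c = 1) ∨ (a = 0 ∧ b = n ∧ c = 0) ∨
        (b = 0 ∧ a + 2*c = n) ∨ (a = 0 ∧ b = 1 ∧ 2*c = n + 1)) := by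
    intro B hB
    have hle : B ≤ Rm g (n*k) (n*k) n := hsum ▸ le_sum_of_mem hB
    obtain ⟨a, b, c, ha, hb, hc, rfl⟩ := le_Rm hg hle
    refine ⟨a, b, c, rfl, ?_⟩
    exact classify hg hc (fun hodd => absurd hev (Nat.not_even_iff_odd.mpr hodd)) (hmins _ hB)
  obtain ⟨p, v, x, y, W, T2, hp, hv, hx, hy, hW, hT2, hyev, e1, e2, e3, e4, e5, e6⟩ :=
    stats hg f hf
  have hSa : (f.map (fun B => B.count g)).sum = n*k := by
    rw [← count_in_sum, hsum, hg.count_Rm_g]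
  have hSb : (f.map (fun B => B.count (-g))).sum = n*k := by
    rw [← count_in_sum, hsum, hg.count_Rm_neg]
  have hSc : (f.map (fun B => B.count ((2:ℕ) • g))).sum = n := by
    rw [← count_in_sum, hsum, hg.count_Rm_two]
  simp only [sum_map_cast] at e1 e2 e3 e5 e6
  rw [hSa] at e1 e5 e6
  rw [hSb] at e2 e5 e6
  rw [hSc] at e3 e5 e6
  rw [hcard] at e4 e5 e6
  have hb1 : 2*l ≤ 2*(n*k) + n := by exact_mod_cast (by push_cast at e5 ⊢; linarith :
    (2*l : ℤ) ≤ 2*((n*k : ℕ):ℤ) + (n:ℤ))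
  have hb2 : 2*(n*k) + n ≤ n*l := by
    have hq : ((n*k:ℕ):ℤ) + ((n*k:ℕ):ℤ) + (n:ℤ) ≤ (n:ℤ)*(l:ℤ) := e6
    have : (2*(n*k) + n : ℕ) ≤ ((n*l : ℕ)) := by
      have h2 : ((2*(n*k)+n : ℕ) : ℤ) ≤ ((n*l : ℕ) : ℤ) := by push_cast; push_cast at hq; linarith
      exact_mod_cast h2
    exact this
  refine ⟨hb1, hb2, ?_⟩
  intro heq
  subst heq
  have hy0 : y = 0 := hyev hev
  apply arith_even (n := n) (k:ℤ) p v x y W T2 hn7z hp hv hx hy0 hW hT2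
  · push_cast at e1 ⊢; linarith
  · push_cast at e2 ⊢; linarith
  · push_cast at e3 ⊢; linarith
  · push_cast at e4 ⊢; linarith

lemma length_facts_odd (hg : Good g n) (hodd : Odd n) (k : ℕ) {l : ℕ}
    (hl : l ∈ lengthSet (Rm g (n*k+2) (n*k) (n-1))) :
    2*l ≤ 2*(n*k) + n + 1 ∧ 2*(n*k) + n + 1 ≤ n*l ∧ l ≠ 2*k+3 := by
  have hn7 : 7 ≤ n := hg.hn
  have hn7z : (7:ℤ) ≤ (n:ℤ) := by exact_mod_cast hn7
  obtain ⟨f, hcard, hmins, hsum⟩ := hl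
  have hf : ∀ B ∈ f, ∃ a b c : ℕ, B = Rm g a b c ∧
      ((a = 1 ∧ b = 1 ∧ c = 0) ∨ (a = 0 ∧ b = 2 ∧ c = 1) ∨ (a = 0 ∧ b = n ∧ c = 0) ∨
        (b = 0 ∧ a + 2*c = n) ∨ (a = 0 ∧ b = 1 ∧ 2*c = n + 1)) := by
    intro B hB
    have hle : B ≤ Rm g (n*k+2) (n*k) (n-1) := hsum ▸ le_sum_of_mem hB
    obtain ⟨a, b, c, ha, hb, hc, rfl⟩ := le_Rm hg hle
    refine ⟨a, b, c, rfl, ?_⟩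
    exact classify hg (by omega) (fun _ => by omega) (hmins _ hB)
  obtain ⟨p, v, x, y, W, T2, hp, hv, hx, hy, hW, hT2, hyev, e1, e2, e3, e4, e5, e6⟩ :=
    stats hg f hf
  have hSa : (f.map (fun B => B.count g)).sum = n*k+2 := by
    rw [← count_in_sum, hsum, hg.count_Rm_g]
  have hSb : (f.map (fun B => B.count (-g))).sum = n*k := by
    rw [← count_in_sum, hsum, hg.count_Rm_neg]
  have hSc : (f.map (fun B => B.count ((2:ℕ) • g))).sum = n-1 := by
    rw [← count_in_sum, hsum, hg.count_Rm_two]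
  simp only [sum_map_cast] at e1 e2 e3 e5 e6
  rw [hSa] at e1 e5 e6
  rw [hSb] at e2 e5 e6
  rw [hSc] at e3 e5 e6
  rw [hcard] at e4 e5 e6
  have hc1 : ((n-1 : ℕ):ℤ) = (n:ℤ) - 1 := by
    push_cast [Nat.cast_sub (by omega : 1 ≤ n)]; ring
  have hb1 : 2*l ≤ 2*(n*k) + n + 1 := by
    have h2 : (2*(l:ℤ)) ≤ 2*((n*k:ℕ):ℤ) + (n:ℤ) + 1 := by
      push_cast at e5 ⊢
      rw [hc1] at e5
      push_cast at e5
      linarith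
    exact_mod_cast h2
  have hb2 : 2*(n*k) + n + 1 ≤ n*l := by
    have h2 : (2*((n*k:ℕ):ℤ) + (n:ℤ) + 1) ≤ (n:ℤ)*(l:ℤ) := by
      rw [hc1] at e6
      push_cast at e6 ⊢
      linarith
    have h3 : ((2*(n*k) + n + 1 : ℕ):ℤ) ≤ ((n*l : ℕ):ℤ) := by push_cast; push_cast at h2; linarith
    exact_mod_cast h3
  refine ⟨hb1, hb2, ?_⟩
  intro heq
  subst heq
  apply arith_odd (n := n) (k:ℤ) p v x y W T2 hn7z hp hv hx hy hW hT2
  · push_cast at e1 ⊢; linarith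
  · push_cast at e2 ⊢; linarith
  · rw [hc1] at e3; push_cast at e3 ⊢; linarith
  · push_cast at e4 ⊢; linarith

end Facts
section Construct

open Multiset

variable {G : Type*} [AddCommGroup G] [DecidableEq G] {g : G} {n : ℕ}

lemma Rm_congr {g : G} {a b c a' b' c' : ℕ} (h1 : a = a') (h2 : b = b') (h3 : c = c') :
    Rm g a b c = Rm g a' b' c' := by subst h1; subst h2; subst h3; rfl

lemma nsmul_Rm (g : G) (p a b c : ℕ) : p • Rm g a b c = Rm g (p*a) (p*b) (p*c) := by
  simp only [Rm, smul_add, nsmul_replicate]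

lemma params (n k m : ℕ) (hn : 7 ≤ n) (hk : 2 ≤ k) (hm1 : 2*k+n ≤ m) (hm2 : m ≤ n*k+2) :
    ∃ x v p : ℕ, v ≤ n-3 ∧ p + 2*v + n*x = n*k ∧ m = p + v + 2*x + 2 := by
  have h2n : 2 ≤ n := by omega
  have h1k : 1 ≤ k := by omega
  set j := n*k + 2 - m with hjdef
  have hj : j + m = n*k + 2 := by omega
  set x := j / (n-2) with hxdef
  set v := j % (n-2) with hvdef
  have hdm : (n-2) * x + v = j := Nat.div_add_mod j (n-2)
  have hvlt : v < n - 2 := Nat.mod_lt _ (by omega)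
  have hexp : (n-2)*(k-1) + (2*k+n) = n*k + 2 := by
    zify [h2n, h1k]
    ring
  have hjle : j ≤ (n-2)*(k-1) := by omega
  have hxle : x ≤ k - 1 := by
    have h1 : (n-2)*x ≤ (n-2)*(k-1) := by omega
    exact Nat.le_of_mul_le_mul_left h1 (by omega)
  have hx2 : (n-2)*x + 2*x = n*x := by
    zify [h2n]
    ring
  refine ⟨x, v, n*k - (2*v + n*x), by omega, ?_, ?_⟩ <;> omega

lemma mem_lengthSet_of (A : Multiset G) (f : Multiset (Multiset G)) (m : ℕ)
    (hcard : Multiset.card f = m) (hmins : ∀ B ∈ f, IsMinZeroSum B) (hsum : f.sum = A) :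
    m ∈ lengthSet A := ⟨f, hcard, hmins, hsum⟩

/-- generic construction: given params, length m is attained; D = target total of 2g's
    minus v (to be split into two W-atoms), t = extra twist in count of g. -/
lemma construct_main (hg : Good g n) (k m : ℕ) (hk : 2 ≤ k)
    (hm1 : 2*k+n ≤ m) (hm2 : m ≤ n*k+2) (cA cC : ℕ)
    (hAC : (cA = n*k ∧ cC = n ∧ Even n) ∨ (cA = n*k+2 ∧ cC = n-1 ∧ Odd n)) :
    m ∈ lengthSet (Rm g cA (n*k) cC) := by
  have hn7 : 7 ≤ n := hg.hn
  obtain ⟨x, v, p, hv3, heq, hm⟩ := params n k m hn7 hk hm1 hm2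
  have hvn : v ≤ n - 3 := hv3
  set D := cC - v with hD
  have hDv : v + D = cC := by rcases hAC with ⟨h1,h2,h3⟩|⟨h1,h2,h3⟩ <;> omega
  set c2 := D / 2 with hc2
  set c1 := D - c2 with hc1
  have hc12 : c1 + c2 = D := by omega
  have h2c2 : 2*c2 ≤ n := by
    rcases hAC with ⟨h1,h2,h3⟩|⟨h1,h2,h3⟩ <;> omega
  have h2c1 : 2*c1 ≤ n := by
    rcases hAC with ⟨h1,h2,h3⟩|⟨h1,h2,h3⟩
    · obtain ⟨t', ht'⟩ := h3; omega
    · omega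
  set f : Multiset (Multiset G) :=
    replicate p (Rm g 1 1 0) + replicate v (Rm g 0 2 1) + replicate x (Rm g 0 n 0) +
      replicate x (Rm g n 0 0) + {Rm g (n-2*c1) 0 c1, Rm g (n-2*c2) 0 c2} with hf
  refine mem_lengthSet_of _ f m ?_ ?_ ?_
  · simp only [hf, card_add, card_replicate]
    have : Multiset.card ({Rm g (n-2*c1) 0 c1, Rm g (n-2*c2) 0 c2} : Multiset (Multiset G)) = 2 := by
      rfl
    rw [this]
    omega
  · intro B hB
    simp only [hf, mem_add, mem_replicate, Multiset.mem_singleton, Multiset.insert_eq_cons,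
      Multiset.mem_cons] at hB
    rcases hB with ((((⟨-, rfl⟩ | ⟨-, rfl⟩) | ⟨-, rfl⟩) | ⟨-, rfl⟩) | rfl | rfl)
    · exact isMin_pair_s13 hg
    · exact isMin_V_s13 hg
    · exact isMin_X hg
    · exact isMin_W hg n 0 (by omega)
    · exact isMin_W hg (n-2*c1) c1 (by omega)
    · exact isMin_W hg (n-2*c2) c2 (by omega)
  · simp only [hf, sum_add, sum_replicate, nsmul_Rm]
    have hpair : ({Rm g (n-2*c1) 0 c1, Rm g (n-2*c2) 0 c2} : Multiset (Multiset G)).sum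
        = Rm g ((n-2*c1) + (n-2*c2)) 0 (c1 + c2) := by
      show (Rm g (n-2*c1) 0 c1 + (Rm g (n-2*c2) 0 c2 + 0)) = _
      rw [add_zero, Rm_add]
    rw [hpair, Rm_add, Rm_add, Rm_add, Rm_add]
    have hxn : x*n = n*x := mul_comm x n
    rcases hAC with ⟨h1,h2,h3⟩|⟨h1,h2,h3⟩ <;> obtain ⟨t', ht'⟩ := h3 <;>
      (refine Rm_congr ?_ ?_ ?_ <;> omega)

/-- the isolated small length 2k+2 -/
lemma construct_small (hg : Good g n) (k : ℕ) (hk : 2 ≤ k) (cA cC t : ℕ)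
    (hAC : (cA = n*k ∧ cC = n ∧ t = 0 ∧ 2*(cC/2) = cC) ∨
      (cA = n*k+2 ∧ cC = n-1 ∧ t = 1 ∧ 2*(cC/2) = cC)) :
    2*k+2 ∈ lengthSet (Rm g cA (n*k) cC) := by
  have hn7 : 7 ≤ n := hg.hn
  set f : Multiset (Multiset G) :=
    replicate k (Rm g 0 n 0) + replicate k (Rm g n 0 0) +
      {Rm g t 0 (cC/2), Rm g t 0 (cC/2)} with hf
  refine mem_lengthSet_of _ f (2*k+2) ?_ ?_ ?_
  · simp only [hf, card_add, card_replicate]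
    have : Multiset.card ({Rm g t 0 (cC/2), Rm g t 0 (cC/2)} : Multiset (Multiset G)) = 2 := rfl
    rw [this]; omega
  · intro B hB
    simp only [hf, mem_add, mem_replicate, Multiset.mem_singleton, Multiset.insert_eq_cons,
      Multiset.mem_cons] at hB
    rcases hB with ((⟨-, rfl⟩ | ⟨-, rfl⟩) | rfl | rfl)
    · exact isMin_X hg
    · exact isMin_W hg n 0 (by omega)
    · refine isMin_W hg t (cC/2) ?_
      rcases hAC with ⟨h1,h2,h3,h4⟩|⟨h1,h2,h3,h4⟩ <;> omega
    · refine isMin_W hg t (cC/2) ?_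
      rcases hAC with ⟨h1,h2,h3,h4⟩|⟨h1,h2,h3,h4⟩ <;> omega
  · simp only [hf, sum_add, sum_replicate, nsmul_Rm]
    have hpair : ({Rm g t 0 (cC/2), Rm g t 0 (cC/2)} : Multiset (Multiset G)).sum
        = Rm g (t+t) 0 (cC/2 + cC/2) := by
      show (Rm g t 0 (cC/2) + (Rm g t 0 (cC/2) + 0)) = _
      rw [add_zero, Rm_add]
    rw [hpair, Rm_add, Rm_add]
    have hkn : k*n = n*k := mul_comm k n
    rcases hAC with ⟨h1,h2,h3,h4⟩|⟨h1,h2,h3,h4⟩ <;>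
      (refine Rm_congr ?_ ?_ ?_ <;> omega)

end Construct
section Final

open Multiset

lemma mem_natSetToInt {L : Set ℕ} {m : ℕ} (h : m ∈ L) : ((m:ℤ)) ∈ natSetToInt L :=
  ⟨m, h, rfl⟩

lemma final_assembly (n k : ℕ) (hn : 7 ≤ n) (hk : 2 ≤ k) (L : Set ℕ) (N : ℕ)
    (hN1 : 2*(n*k)+n ≤ N) (hN2 : N ≤ 2*(n*k)+n+1)
    (hBig : ∀ l ∈ L, 2*l ≤ N ∧ N ≤ n*l ∧ l ≠ 2*k+3)
    (hCon : ∀ m, 2*k+n ≤ m → m ≤ n*k+2 → m ∈ L)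
    (hSmall : 2*k+2 ∈ L) :
    IsAAP 1 n (natSetToInt L) ∧ ¬IsAP 1 (natSetToInt L) := by
  have h2n : 2 ≤ n := by omega
  have h1k : 1 ≤ k := by omega
  have hexp : (n-2)*(k-1) + (2*k+n) = n*k + 2 := by
    zify [h2n, h1k]; ring
  have hub : ∀ l ∈ L, l ≤ n*k + 2 + n := by
    intro l hl
    have h1 := (hBig l hl).1
    omega
  have hlb : ∀ l ∈ L, 2*k+1 ≤ l := by
    intro l hl
    have h2 := (hBig l hl).2.1
    have h3 : n*(2*k+1) ≤ n*l := by
      have : n*(2*k+1) = 2*(n*k)+n := by ring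
      omega
    exact Nat.le_of_mul_le_mul_left h3 (by omega)
  constructor
  · -- IsAAP
    refine ⟨one_pos, ((2*k+n : ℕ) : ℤ), (n-2)*(k-1),
      {w : ℤ | w ∈ Set.Icc (-(n:ℤ)) (-1) ∧ (((2*k+n : ℕ):ℤ) + w) ∈ natSetToInt L},
      {w : ℤ | w ∈ Set.Icc ((((n-2)*(k-1) : ℕ):ℤ)*((1:ℕ):ℤ) + 1)
          ((((n-2)*(k-1) : ℕ):ℤ)*((1:ℕ):ℤ) + (n:ℤ)) ∧ (((2*k+n : ℕ):ℤ) + w) ∈ natSetToInt L},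
      fun w hw => hw.1, fun w hw => hw.1, fun x _ => one_dvd x, fun x _ => one_dvd x, ?_⟩
    ext z
    simp only [Set.mem_image, Set.mem_union, Set.mem_setOf_eq, Set.mem_Icc]
    constructor
    · rintro ⟨m, hmL, rfl⟩
      have hm1 := hlb m hmL
      have hm2 := hub m hmL
      rcases lt_or_ge m (2*k+n) with hc1 | hc1
      · -- lower sporadic part
        refine ⟨(m:ℤ) - ((2*k+n : ℕ):ℤ), Or.inl (Or.inl ⟨⟨?_, ?_⟩, ?_⟩), by ring⟩
        · push_cast; omega
        · push_cast; omega
        · have : ((2*k+n : ℕ):ℤ) + ((m:ℤ) - ((2*k+n : ℕ):ℤ)) = (m:ℤ) := by ring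
          rw [this]; exact mem_natSetToInt hmL
      rcases le_or_gt m (n*k+2) with hc2 | hc2
      · -- main interval
        refine ⟨(m:ℤ) - ((2*k+n : ℕ):ℤ), Or.inl (Or.inr ⟨m - (2*k+n), by omega, ?_⟩), by ring⟩
        push_cast [Nat.cast_sub hc1]
        ring
      · -- upper sporadic part
        refine ⟨(m:ℤ) - ((2*k+n : ℕ):ℤ), Or.inr ⟨⟨?_, ?_⟩, ?_⟩, by ring⟩
        · push_cast; omega
        · push_cast; omega
        · have : ((2*k+n : ℕ):ℤ) + ((m:ℤ) - ((2*k+n : ℕ):ℤ)) = (m:ℤ) := by ring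
          rw [this]; exact mem_natSetToInt hmL
    · rintro ⟨w, (⟨hb, hmem⟩ | ⟨ν, hν, rfl⟩) | ⟨hb, hmem⟩, rfl⟩
      · obtain ⟨m, hmL, hme⟩ := hmem
        exact ⟨m, hmL, by rw [hme]⟩
      · have hm : 2*k+n+ν ∈ L := by
          refine hCon (2*k+n+ν) (by omega) (by omega)
        refine ⟨2*k+n+ν, hm, by push_cast; ring⟩
      · obtain ⟨m, hmL, hme⟩ := hmem
        exact ⟨m, hmL, by rw [hme]⟩
  · -- not an AP
    rintro ⟨-, a, l0, hL⟩
    have h1 : ((2*k+2 : ℕ):ℤ) ∈ natSetToInt L := mem_natSetToInt hSmall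
    have h3 : ((2*k+n : ℕ):ℤ) ∈ natSetToInt L :=
      mem_natSetToInt (hCon (2*k+n) le_rfl (by omega))
    have h2 : ((2*k+3 : ℕ):ℤ) ∉ natSetToInt L := by
      rintro ⟨m, hmL, hme⟩
      have : m = 2*k+3 := by
        have h4 : ((m:ℤ)) = ((2*k+3 : ℕ):ℤ) := hme
        exact_mod_cast h4
      exact (hBig m hmL).2.2 this
    rw [hL] at h1 h3
    obtain ⟨ν1, hν1, he1⟩ := h1
    obtain ⟨ν2, hν2, he2⟩ := h3
    have hνlt : ν1 < ν2 := by
      have : (ν1:ℤ) < (ν2:ℤ) := by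
        push_cast at he1 he2
        nlinarith [he1, he2]
      exact_mod_cast this
    apply h2
    rw [hL]
    refine ⟨ν1+1, by omega, ?_⟩
    push_cast at he1 ⊢
    linarith

end Final

/-- **Lemma 4.3.** Let `G` be cyclic of order `n ≥ 7` and `g` a generator. For `k ∈ ℕ`,
let `A_k = g^{nk} (-g)^{nk} (2g)^n` if `n` is even, and
`A_k = g^{nk+2} (-g)^{nk} (2g)^{n-1}` if `n` is odd. Then there is a bound `M ∈ ℕ` such
that for all `k ≥ n-1`, the set `𝖫(A_k)` is an AAP with difference `1` and bound `M`,
but not an arithmetical progression with difference `1`. -/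
theorem stmt_13 (G : Type*) [AddCommGroup G] (n : ℕ) (hcyc : IsAddCyclic G)
    (hcard : Nat.card G = n) (hn : 7 ≤ n) (g : G) (hord : addOrderOf g = n) :
    ∃ M : ℕ, 0 < M ∧ ∀ k : ℕ, n - 1 ≤ k →
      let A : Multiset G :=
        if Even n then
          Multiset.replicate (n * k) g + Multiset.replicate (n * k) (-g) +
            Multiset.replicate n ((2 : ℕ) • g)
        else
          Multiset.replicate (n * k + 2) g + Multiset.replicate (n * k) (-g) +
            Multiset.replicate (n - 1) ((2 : ℕ) • g)
      IsAAP 1 M (natSetToInt (lengthSet A)) ∧ ¬IsAP 1 (natSetToInt (lengthSet A)) := by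
  classical
  have hg : Good g n := ⟨hn, hord⟩
  refine ⟨n, by omega, ?_⟩
  intro k hk
  have hk2 : 2 ≤ k := by omega
  dsimp only
  by_cases hpar : Even n
  · rw [if_pos hpar]
    have hA : (Multiset.replicate (n * k) g + Multiset.replicate (n * k) (-g) +
        Multiset.replicate n ((2 : ℕ) • g)) = Rm g (n*k) (n*k) n := rfl
    rw [hA]
    refine final_assembly n k hn hk2 _ (2*(n*k)+n) le_rfl (by omega) ?_ ?_ ?_
    · intro l hl
      exact length_facts_even hg hpar k hl
    · intro m h1 h2
      exact construct_main hg k m hk2 h1 h2 (n*k) n (Or.inl ⟨rfl, rfl, hpar⟩)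
    · refine construct_small hg k hk2 (n*k) n 0 (Or.inl ⟨rfl, rfl, rfl, ?_⟩)
      obtain ⟨t, ht⟩ := hpar
      omega
  · rw [if_neg hpar]
    have hodd : Odd n := Nat.not_even_iff_odd.mp hpar
    have hA : (Multiset.replicate (n * k + 2) g + Multiset.replicate (n * k) (-g) +
        Multiset.replicate (n-1) ((2 : ℕ) • g)) = Rm g (n*k+2) (n*k) (n-1) := rfl
    rw [hA]
    refine final_assembly n k hn hk2 _ (2*(n*k)+n+1) (by omega) le_rfl ?_ ?_ ?_
    · intro l hl
      exact length_facts_odd hg hodd k hl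
    · intro m h1 h2
      exact construct_main hg k m hk2 h1 h2 (n*k+2) (n-1) (Or.inr ⟨rfl, rfl, hodd⟩)
    · refine construct_small hg k hk2 (n*k+2) (n-1) 1 (Or.inr ⟨rfl, rfl, rfl, ?_⟩)
      obtain ⟨t, ht⟩ := hodd
      omega
end

section
/- Let G be a finite abelian group and let S be a zero-sum free sequence over G, i.e. no nonempty submultiset of S has sum 0. If ∏_{g ∈ supp(S)} (1 + v_g(S)) > |G|, where v_g(S) is the multiplicity of g in S and supp(S) = {g ∈ G : v_g(S) > 0}, then there is an atom A of ℬ(G) with |A| ≥ 3 such that the union (−A)·A is a submultiset of (−S)·S (here −T denotes the multiset of the negatives of the elements of T). -/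
private lemma mySumMapNeg {G : Type*} [AddCommGroup G] (m : Multiset G) :
    (m.map (fun x => -x)).sum = -m.sum :=
  Multiset.sum_map_neg' m

/-- **Lemma 5.4.** Let `G` be a finite abelian group and `S` a zero-sum free sequence over
`G`. If `∏_{g ∈ supp(S)} (1 + v_g(S)) > |G|`, then there is an atom `A` of `ℬ(G)` with
`|A| ≥ 3` such that `(-A)A` divides `(-S)S`. -/
theorem stmt_17 (G : Type*) [AddCommGroup G] [Finite G] [DecidableEq G]
    (S : Multiset G) (hS : ∀ T : Multiset G, T ≤ S → T ≠ 0 → T.sum ≠ 0)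
    (hprod : Nat.card G < S.toFinset.prod (fun g => 1 + S.count g)) :
    ∃ A : Multiset G, IsMinZeroSum A ∧ 3 ≤ Multiset.card A ∧
      A.map (fun x => -x) + A ≤ S.map (fun x => -x) + S := by
  classical
  have _ : Fintype G := Fintype.ofFinite G
  -- Step 1: pigeonhole gives two distinct submultisets with equal sums
  obtain ⟨T₁, T₂, hT₁, hT₂, hTne, hTsum⟩ :
      ∃ T₁ T₂ : Multiset G, T₁ ≤ S ∧ T₂ ≤ S ∧ T₁ ≠ T₂ ∧ T₁.sum = T₂.sum := by
    set ψ : (∀ g : S.toFinset, Fin (S.count g.1 + 1)) → Multiset G :=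
      fun c => ∑ g ∈ S.toFinset.attach, Multiset.replicate (c g : ℕ) g.1 with hψ
    have hcount : ∀ c, ∀ h : G, (ψ c).count h =
        if hh : h ∈ S.toFinset then (c ⟨h, hh⟩ : ℕ) else 0 := by
      intro c h
      rw [hψ]
      simp only
      rw [Multiset.count_sum']
      split
      next hh =>
        rw [Finset.sum_eq_single (⟨h, hh⟩ : S.toFinset)]
        · simp [Multiset.count_replicate]
        · intro b _ hb
          rw [Multiset.count_replicate, if_neg]
          intro he
          exact hb (Subtype.ext he)
        · intro hmem
          exact absurd (Finset.mem_attach _ _) hmem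
      next hh =>
        apply Finset.sum_eq_zero
        intro b _
        rw [Multiset.count_replicate, if_neg]
        intro he; exact hh (he ▸ b.2)
    have hle : ∀ c, ψ c ≤ S := by
      intro c
      rw [Multiset.le_iff_count]
      intro h
      rw [hcount]
      split
      next hh =>
        have : h ∈ S.toFinset := hh
        exact Nat.lt_succ_iff.mp (Fin.is_lt _)
      next => exact Nat.zero_le _
    have hinj : Function.Injective ψ := by
      intro c₁ c₂ h
      funext g
      have h2 := congrArg (Multiset.count g.1) h
      rw [hcount, hcount, dif_pos g.2, dif_pos g.2] at h2
      exact Fin.ext (by simpa using h2)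
    have hcard : Fintype.card G < Fintype.card (∀ g : S.toFinset, Fin (S.count g.1 + 1)) := by
      rw [← Nat.card_eq_fintype_card]
      calc Nat.card G < S.toFinset.prod (fun g => 1 + S.count g) := hprod
        _ = _ := by
          rw [Fintype.card_pi]
          rw [← Finset.prod_coe_sort S.toFinset (fun g => 1 + S.count g)]
          exact Finset.prod_congr rfl (fun g _ => by simp [Nat.add_comm])
    obtain ⟨c₁, c₂, hcc, heq⟩ :=
      Fintype.exists_ne_map_eq_of_card_lt (fun c => (ψ c).sum) hcard
    exact ⟨ψ c₁, ψ c₂, hle c₁, hle c₂, fun h => hcc (hinj h), heq⟩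
  -- Step 2: make them disjoint
  set U₁ := T₁ - T₂ with hU₁def
  set U₂ := T₂ - T₁ with hU₂def
  have hUle : U₁ + U₂ ≤ S := by
    rw [Multiset.le_iff_count]
    intro g
    have h1 := Multiset.count_le_of_le g hT₁
    have h2 := Multiset.count_le_of_le g hT₂
    rw [Multiset.count_add, hU₁def, hU₂def, Multiset.count_sub, Multiset.count_sub]
    omega
  have hU₁S : U₁ ≤ S := le_trans (Multiset.le_add_right _ _) hUle
  have hU₂S : U₂ ≤ S := le_trans (Multiset.le_add_left _ _) hUle
  have hUsum : U₁.sum = U₂.sum := by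
    have e1 := congrArg Multiset.sum (Multiset.sub_add_inter T₁ T₂)
    have e2 := congrArg Multiset.sum (Multiset.sub_add_inter T₂ T₁)
    rw [Multiset.sum_add] at e1 e2
    rw [Multiset.inter_comm] at e2
    exact add_right_cancel (e1.trans (hTsum.trans e2.symm))
  have hne0 : ¬(U₁ = 0 ∧ U₂ = 0) := by
    rintro ⟨h1, h2⟩
    apply hTne
    ext g
    have e1 : Multiset.count g U₁ = 0 := by rw [h1]; simp
    have e2 : Multiset.count g U₂ = 0 := by rw [h2]; simp
    rw [hU₁def, Multiset.count_sub] at e1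
    rw [hU₂def, Multiset.count_sub] at e2
    omega
  have hU₁ne : U₁ ≠ 0 := by
    intro h1
    have h2 : U₂ ≠ 0 := fun h2 => hne0 ⟨h1, h2⟩
    exact hS U₂ hU₂S h2 (by rw [← hUsum, h1]; simp)
  have hU₂ne : U₂ ≠ 0 := by
    intro h2
    have h1 : U₁ ≠ 0 := fun h1 => hne0 ⟨h1, h2⟩
    exact hS U₁ hU₁S h1 (by rw [hUsum, h2]; simp)
  have hdisj : ∀ g : G, g ∈ U₁ → g ∉ U₂ := by
    intro g h1 h2
    rw [← Multiset.count_pos, hU₁def, Multiset.count_sub] at h1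
    rw [← Multiset.count_pos, hU₂def, Multiset.count_sub] at h2
    omega
  -- Step 3: the big zero-sum sequence A₀
  set A₀ : Multiset G := U₁.map (fun x => -x) + U₂ with hA₀def
  have hA₀sum : A₀.sum = 0 := by
    rw [hA₀def, Multiset.sum_add, mySumMapNeg, hUsum, neg_add_cancel]
  have hA₀ne : A₀ ≠ 0 := by
    intro h
    exact hU₂ne (Multiset.le_zero.mp (h ▸ Multiset.le_add_left U₂ (U₁.map fun x => -x)))
  -- Step 4: pick a minimal nonempty zero-sum subsequence of A₀
  have hP : ∃ n, ∃ A : Multiset G, A ≤ A₀ ∧ A ≠ 0 ∧ A.sum = 0 ∧ Multiset.card A = n :=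
    ⟨_, A₀, le_refl _, hA₀ne, hA₀sum, rfl⟩
  obtain ⟨A, hAle, hAne, hAsum, hAcard⟩ := Nat.find_spec hP
  have hmin : IsMinZeroSum A := by
    refine ⟨hAne, hAsum, ?_⟩
    rintro ⟨B, C, hB, hC, hBs, hCs, rfl⟩
    have hBle : B ≤ A₀ := le_trans (Multiset.le_add_right _ _) hAle
    have hlt : Multiset.card B < Nat.find hP := by
      rw [← hAcard, Multiset.card_add]
      have : 0 < Multiset.card C := Multiset.card_pos.mpr hC
      omega
    exact Nat.find_min hP hlt ⟨B, hBle, hB, hBs, rfl⟩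
  -- Step 5: |A| ≥ 3
  have hA3 : 3 ≤ Multiset.card A := by
    by_contra hlt
    push_neg at hlt
    set B := A ∩ (U₁.map (fun x => -x)) with hBdef
    set C := A - (U₁.map (fun x => -x)) with hCdef
    have hBC : C + B = A := Multiset.sub_add_inter A _
    have hBle : B ≤ U₁.map (fun x => -x) := Multiset.inter_le_right
    have hCle : C ≤ U₂ := by
      rw [Multiset.le_iff_count]
      intro g
      have h1 := Multiset.count_le_of_le g hAle
      rw [hA₀def, Multiset.count_add] at h1
      rw [hCdef, Multiset.count_sub]
      omega
    set B' := B.map (fun x => -x) with hB'def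
    have hB'le : B' ≤ U₁ := by
      have h := Multiset.map_le_map (f := fun x : G => -x) hBle
      simpa [Multiset.map_map, Function.comp, neg_neg, Multiset.map_id'] using h
    have hB'sum : B'.sum = -B.sum := mySumMapNeg B
    have hsums : C.sum = B'.sum := by
      have h := congrArg Multiset.sum hBC
      rw [Multiset.sum_add, hAsum] at h
      rw [hB'sum]
      linear_combination (norm := abel) h
    have hBne : B ≠ 0 := by
      intro h0
      have hAC : A = C := by rw [← hBC, h0, add_zero]
      exact hS C (le_trans hCle hU₂S) (hAC ▸ hAne) (hAC ▸ hAsum)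
    have hCne : C ≠ 0 := by
      intro h0
      have hAB : A = B := by rw [← hBC, h0, zero_add]
      have hB'ne : B' ≠ 0 := by
        rw [hB'def, Ne, Multiset.map_eq_zero]
        exact hAB ▸ hAne
      apply hS B' (le_trans hB'le hU₁S) hB'ne
      rw [← hsums, h0, Multiset.sum_zero]
    have hcB : 1 ≤ Multiset.card B := Multiset.card_pos.mpr hBne
    have hcC : 1 ≤ Multiset.card C := Multiset.card_pos.mpr hCne
    have hcA : Multiset.card C + Multiset.card B = Multiset.card A := by
      rw [← hBC, Multiset.card_add]
    have hcB1 : Multiset.card B = 1 := by omega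
    have hcC1 : Multiset.card C = 1 := by omega
    have hcB'1 : Multiset.card B' = 1 := by rw [hB'def, Multiset.card_map]; exact hcB1
    obtain ⟨t, ht⟩ := Multiset.card_eq_one.mp hcB'1
    obtain ⟨s, hs⟩ := Multiset.card_eq_one.mp hcC1
    have hts : s = t := by
      have := hsums
      rw [ht, hs, Multiset.sum_singleton, Multiset.sum_singleton] at this
      exact this
    have htU₁ : t ∈ U₁ := Multiset.singleton_le.mp (ht ▸ hB'le)
    have hsU₂ : s ∈ U₂ := Multiset.singleton_le.mp (hs ▸ hCle)
    exact hdisj t htU₁ (hts ▸ hsU₂)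
  -- Step 6: conclude
  refine ⟨A, hmin, hA3, ?_⟩
  have h1 : A.map (fun x => -x) + A ≤ A₀.map (fun x => -x) + A₀ :=
    add_le_add (Multiset.map_le_map hAle) hAle
  have h2 : A₀.map (fun x => -x) + A₀ = (U₁ + U₂).map (fun x => -x) + (U₁ + U₂) := by
    simp only [hA₀def, Multiset.map_add, Multiset.map_map, Function.comp, neg_neg,
      Multiset.map_id']
    ext g
    simp only [Multiset.count_add]
    omega
  have h3 : (U₁ + U₂).map (fun x => -x) + (U₁ + U₂) ≤ S.map (fun x => -x) + S :=
    add_le_add (Multiset.map_le_map hUle) hUle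
  exact le_trans h1 (h2 ▸ h3)
end
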